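/- arXiv:0704.2633 — 4 statements merged into one kernel-verified Lean document; each statement's English description precedes it below -/
import Mathlib

section
/- For indeterminates ξ₁,…,ξ_N and parameters p,q with p+q=1, the following identity holds: ∑_{k=1}^N ∏_{j≠k}(p+qξ_kξ_j−ξ_k) · (1−ξ_k)/ξ_k · 1/∏_{j≠k}(ξ_j−ξ_k) = p^{N−1}(1−ξ₁ξ₂⋯ξ_N)/(ξ₁ξ₂⋯ξ_N), provided the ξ_i are nonzero and pairwise distinct. -/
open Finset Polynomial

lemma coeff_eq_sum_div (s : Finset ℂ) (f : ℂ[X]) (hf : f.degree < s.card) :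
    f.coeff (s.card - 1) = ∑ a ∈ s, f.eval a * ∏ b ∈ s.erase a, (a - b)⁻¹ := by
  have hinj : Set.InjOn id (s : Set ℂ) := Set.injOn_id _
  conv_lhs => rw [Lagrange.eq_interpolate (f := f) (v := id) hinj (by simpa using hf)]
  rw [Lagrange.interpolate_apply, finset_sum_coeff]
  refine Finset.sum_congr rfl fun a ha => ?_
  rw [coeff_C_mul]
  have hb : Lagrange.basis s id a
      = C (Lagrange.nodalWeight s id a) * Lagrange.nodal (s.erase a) id := by
    rw [Lagrange.basis_eq_prod_sub_inv_mul_nodal_div ha,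
      Lagrange.nodal_erase_eq_nodal_div ha]
  have hdeg : (Lagrange.nodal (s.erase a) id).natDegree = s.card - 1 := by
    rw [Lagrange.natDegree_nodal, card_erase_of_mem ha]
  have hc : (Lagrange.nodal (s.erase a) id).coeff (s.card - 1) = 1 := by
    rw [← hdeg]; exact Lagrange.nodal_monic.coeff_natDegree
  rw [hb, coeff_C_mul, hc]
  simp [Lagrange.nodalWeight]

lemma key (M : ℕ) (p q : ℂ) (hpq : p + q = 1)
    (ξ : Fin (M + 1) → ℂ) (hne : ∀ i, ξ i ≠ 0) (hinj : Function.Injective ξ)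
    (hq : q ≠ 0) (hp : p ≠ 0) (hpb : ∀ j, p - q * ξ j ≠ 0) :
    ∑ k : Fin (M + 1),
      (∏ j ∈ univ.erase k, (p + q * ξ k * ξ j - ξ k)) *
        ((1 - ξ k) / ξ k) * (1 / ∏ j ∈ univ.erase k, (ξ j - ξ k))
      = p ^ M * (1 - ∏ j, ξ j) / ∏ j, ξ j := by
  classical
  set r : ℂ := p / q with hrdef
  have hqr : q * r = p := by rw [hrdef, mul_comm, div_mul_cancel₀ p hq]
  have hr0 : r ≠ 0 := div_ne_zero hp hq
  have hrξ : ∀ j, r ≠ ξ j := by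
    intro j h
    exact hpb j (by rw [← hqr, h]; ring)
  have hξr : ∀ k, ξ k - r ≠ 0 := fun k => sub_ne_zero_of_ne fun h => hrξ k h.symm
  have hP : (∏ j, ξ j) ≠ 0 := prod_ne_zero_iff.mpr fun j _ => hne j
  have hW : (∏ j, (r - ξ j)) ≠ 0 :=
    prod_ne_zero_iff.mpr fun j _ => sub_ne_zero_of_ne (hrξ j)
  have hPk : ∀ k, (∏ j ∈ univ.erase k, (ξ j - ξ k)) ≠ 0 := fun k =>
    prod_ne_zero_iff.mpr fun j hj =>
      sub_ne_zero_of_ne fun h => (mem_erase.mp hj).1 (hinj h)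
  have hs1 : ((-1 : ℂ)) ^ M ≠ 0 := pow_ne_zero _ (by norm_num)
  -- the point set
  set T : Finset ℂ := univ.image ξ with hTdef
  have h0T : (0 : ℂ) ∉ T := by
    simp only [hTdef, mem_image]
    rintro ⟨j, -, hj⟩; exact hne j hj
  have hrT : r ∉ T := by
    simp only [hTdef, mem_image]
    rintro ⟨j, -, hj⟩; exact hrξ j hj.symm
  have h0rT : (0 : ℂ) ∉ insert r T := by
    simp only [mem_insert]
    rintro (h | h)
    · exact hr0 h.symm
    · exact h0T h
  set s : Finset ℂ := insert 0 (insert r T) with hsdef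
  have hTcard : T.card = M + 1 := by
    rw [hTdef, card_image_of_injective _ hinj, card_univ, Fintype.card_fin]
  have hscard : s.card = M + 3 := by
    rw [hsdef, card_insert_of_notMem h0rT, card_insert_of_notMem hrT, hTcard]
  -- the polynomial
  set f : ℂ[X] := ∏ j : Fin (M + 1), (C p + C (q * ξ j - 1) * X) with hfdef
  have hfnat : f.natDegree ≤ M + 1 := by
    refine (natDegree_prod_le _ _).trans ?_
    have : ∀ j : Fin (M + 1), (C p + C (q * ξ j - 1) * X).natDegree ≤ 1 := by
      intro j
      refine (natDegree_add_le _ _).trans ?_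
      rw [natDegree_C]
      refine max_le (Nat.zero_le _) (natDegree_mul_le.trans ?_)
      rw [natDegree_C, natDegree_X]
    have h1 : ∑ j : Fin (M+1), (C p + C (q * ξ j - 1) * X).natDegree
        ≤ ∑ _j : Fin (M+1), (1:ℕ) := Finset.sum_le_sum fun j _ => this j
    simpa using h1
  have hfdeg : f.degree < s.card := by
    rw [hscard]
    exact lt_of_le_of_lt (degree_le_natDegree) (by exact_mod_cast Nat.lt_succ_of_le (hfnat.trans (by omega)))
  have hco : f.coeff (s.card - 1) = 0 := by
    apply coeff_eq_zero_of_natDegree_lt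
    rw [hscard]; omega
  have h := coeff_eq_sum_div s f hfdeg
  rw [hco] at h
  -- split the sum
  rw [hsdef, sum_insert h0rT, sum_insert hrT, sum_image (fun a _ b _ h => hinj h)] at h
  have h0r : (0 : ℂ) ≠ r := fun h => hr0 h.symm
  have hE0 : (insert (0:ℂ) (insert r T)).erase 0 = insert r T := erase_insert h0rT
  have hEr : (insert (0:ℂ) (insert r T)).erase r = insert 0 T := by
    rw [erase_insert_of_ne h0r, erase_insert hrT]
  have hEk : ∀ k, (insert (0:ℂ) (insert r T)).erase (ξ k)
      = insert 0 (insert r (image ξ (univ.erase k))) := by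
    intro k
    rw [erase_insert_of_ne (Ne.symm (hne k)), erase_insert_of_ne (hrξ k), hTdef,
      ← image_erase hinj]
  rw [hE0, hEr] at h
  rw [prod_insert hrT, prod_insert h0T] at h
  rw [hTdef, prod_image (fun a _ b _ h => hinj h), prod_image (fun a _ b _ h => hinj h)] at h
  have hsum : ∀ k, ∏ b ∈ (insert (0:ℂ) (insert r T)).erase (ξ k), (ξ k - b)⁻¹
      = (ξ k - 0)⁻¹ * ((ξ k - r)⁻¹ * ∏ j ∈ univ.erase k, (ξ k - ξ j)⁻¹) := by
    intro k
    rw [hEk k]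
    have h1 : r ∉ image ξ (univ.erase k) := by
      simp only [mem_image]
      rintro ⟨j, -, hj⟩; exact hrξ j hj.symm
    have h2 : (0:ℂ) ∉ insert r (image ξ (univ.erase k)) := by
      simp only [mem_insert, mem_image]
      rintro (h | ⟨j, -, hj⟩)
      · exact h0r h
      · exact hne j hj
    rw [prod_insert h2, prod_insert h1, prod_image (fun a _ b _ h => hinj h)]
  rw [sum_congr rfl fun k _ => by rw [hsum k]] at h
  -- evaluation facts
  have hev : ∀ x : ℂ, f.eval x = ∏ j, (p + (q * ξ j - 1) * x) := by
    intro x; rw [hfdef, eval_prod]; simp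
  have hev0 : f.eval 0 = p ^ (M + 1) := by
    rw [hev]; simp
  have hevr : f.eval r = -((-1) ^ M * p ^ (M + 1)) * ∏ j, (r - ξ j) := by
    rw [hev]
    have e1 : ∀ j ∈ (univ : Finset (Fin (M+1))), p + (q * ξ j - 1) * r = (-p) * (r - ξ j) := by
      intro j _
      rw [hrdef]
      field_simp
      ring_nf
      linear_combination hpq
    rw [prod_congr rfl e1, prod_mul_distrib, prod_const, card_univ, Fintype.card_fin,
      neg_pow, pow_succ]
    ring
  have hevk : ∀ k, f.eval (ξ k)
      = (∏ j ∈ univ.erase k, (p + q * ξ k * ξ j - ξ k)) * ((1 - ξ k) * (p - q * ξ k)) := by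
    intro k
    rw [hev, ← mul_prod_erase univ _ (mem_univ k)]
    have h1 : p + (q * ξ k - 1) * ξ k = (1 - ξ k) * (p - q * ξ k) := by
      linear_combination (ξ k) * hpq
    have h2 : ∏ j ∈ univ.erase k, (p + (q * ξ j - 1) * ξ k)
        = ∏ j ∈ univ.erase k, (p + q * ξ k * ξ j - ξ k) := prod_congr rfl fun j _ => by ring
    rw [h1, h2, mul_comm]
  -- sign flips
  have hflipk : ∀ k, ∏ j ∈ univ.erase k, (ξ k - ξ j)
      = (-1) ^ M * ∏ j ∈ univ.erase k, (ξ j - ξ k) := by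
    intro k
    have e1 : ∀ j ∈ univ.erase k, ξ k - ξ j = (-1) * (ξ j - ξ k) := fun j _ => by ring
    rw [prod_congr rfl e1, prod_mul_distrib, prod_const, card_erase_of_mem (mem_univ k),
      card_univ, Fintype.card_fin, Nat.add_sub_cancel]
  have hflip0 : ∏ j, ((0:ℂ) - ξ j) = -((-1) ^ M * ∏ j, ξ j) := by
    have e1 : ∀ j ∈ (univ : Finset (Fin (M+1))), (0:ℂ) - ξ j = (-1) * ξ j := fun j _ => by ring
    rw [prod_congr rfl e1, prod_mul_distrib, prod_const, card_univ, Fintype.card_fin, pow_succ]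
    ring
  -- per-term identity
  have hterm : ∀ k, eval (ξ k) f * ((ξ k - 0)⁻¹ * ((ξ k - r)⁻¹ * ∏ j ∈ univ.erase k, (ξ k - ξ j)⁻¹))
      = (-q * (-1) ^ M) * ((∏ j ∈ univ.erase k, (p + q * ξ k * ξ j - ξ k)) *
          ((1 - ξ k) / ξ k) * (1 / ∏ j ∈ univ.erase k, (ξ j - ξ k))) := by
    intro k
    rw [hevk k, prod_inv_distrib, hflipk k]
    have hm : ((-1:ℂ) ^ M * ∏ j ∈ univ.erase k, (ξ j - ξ k))⁻¹
        = (-1) ^ M * (∏ j ∈ univ.erase k, (ξ j - ξ k))⁻¹ := by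
      rw [mul_inv, ← inv_pow, inv_neg, inv_one]
    have e2 : ξ k - r = -(p - q * ξ k) / q := by
      rw [hrdef]; field_simp; ring
    rw [hm, sub_zero, e2, inv_div, div_neg]
    linear_combination (-q * (-1:ℂ) ^ M * (∏ j ∈ univ.erase k, (p + q * ξ k * ξ j - ξ k)) *
      (1 - ξ k) * (ξ k)⁻¹ * (∏ j ∈ univ.erase k, (ξ j - ξ k))⁻¹) * mul_inv_cancel₀ (hpb k)
  rw [sum_congr rfl fun k _ => hterm k, ← mul_sum] at h
  rw [hev0, hevr, prod_inv_distrib, prod_inv_distrib, hflip0] at h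
  have ht : ((-1:ℂ)) ^ M * (-1) ^ M = 1 := by
    rw [← pow_add, ← two_mul, pow_mul]; norm_num
  have c1 : ((0:ℂ) - r)⁻¹ = -(q * p⁻¹) := by
    rw [hrdef, zero_sub, inv_neg, inv_div, div_eq_mul_inv]
  have c2 : (-((-1:ℂ) ^ M * ∏ j, ξ j))⁻¹ = -((-1) ^ M * (∏ j, ξ j)⁻¹) := by
    rw [inv_neg, mul_inv, ← inv_pow, inv_neg, inv_one]
  have c3 : (r - (0:ℂ))⁻¹ = q * p⁻¹ := by
    rw [hrdef, sub_zero, inv_div, div_eq_mul_inv]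
  rw [c1, c2, c3] at h
  have k0 : p ^ (M + 1) * (-(q * p⁻¹) * -((-1:ℂ) ^ M * (∏ j, ξ j)⁻¹))
      = (-1) ^ M * q * p ^ M * (∏ j, ξ j)⁻¹ := by
    rw [pow_succ]
    field_simp
  have k1 : (-((-1:ℂ) ^ M * p ^ (M + 1)) * ∏ j, (r - ξ j)) *
        ((q * p⁻¹) * (∏ j, (r - ξ j))⁻¹) = -((-1) ^ M * q * p ^ M) := by
    rw [pow_succ]
    field_simp
  rw [k0, k1] at h
  have hqt : q * (-1:ℂ) ^ M ≠ 0 := mul_ne_zero hq hs1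
  apply mul_left_cancel₀ hqt
  have e4 : q * (-1:ℂ) ^ M * (p ^ M * (1 - ∏ j, ξ j) / ∏ j, ξ j)
      = (-1) ^ M * q * p ^ M * (∏ j, ξ j)⁻¹ - (-1) ^ M * q * p ^ M := by
    field_simp
  rw [e4]
  linear_combination h

theorem stmt_0 (N : ℕ) (hN : 1 ≤ N) (p q : ℂ) (hpq : p + q = 1)
    (ξ : Fin N → ℂ) (hne : ∀ i, ξ i ≠ 0) (hinj : Function.Injective ξ) :
    ∑ k : Fin N,
      (∏ j ∈ univ.erase k, (p + q * ξ k * ξ j - ξ k)) *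
        ((1 - ξ k) / ξ k) * (1 / ∏ j ∈ univ.erase k, (ξ j - ξ k))
      = p ^ (N - 1) * (1 - ∏ j, ξ j) / ∏ j, ξ j := by
  classical
  obtain ⟨M, rfl⟩ : ∃ M, N = M + 1 := ⟨N - 1, by omega⟩
  obtain rfl : q = 1 - p := by linear_combination hpq
  set P : ℂ := ∏ j, ξ j with hPdef
  have hP : P ≠ 0 := prod_ne_zero_iff.mpr fun j _ => hne j
  set L : ℂ[X] := ∑ k : Fin (M + 1),
      (∏ j ∈ univ.erase k, (X + (1 - X) * C (ξ k) * C (ξ j) - C (ξ k))) *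
        C ((1 - ξ k) / ξ k) * C (1 / ∏ j ∈ univ.erase k, (ξ j - ξ k)) with hL
  set R : ℂ[X] := X ^ M * C ((1 - P) / P) with hR
  have hevL : ∀ x : ℂ, eval x L = ∑ k : Fin (M + 1),
      (∏ j ∈ univ.erase k, (x + (1 - x) * ξ k * ξ j - ξ k)) *
        ((1 - ξ k) / ξ k) * (1 / ∏ j ∈ univ.erase k, (ξ j - ξ k)) := by
    intro x
    rw [hL, eval_finset_sum]
    refine sum_congr rfl fun k _ => ?_
    rw [eval_mul, eval_mul, eval_prod, eval_C, eval_C]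
    congr 1
    congr 1
    exact prod_congr rfl fun j _ => by simp
  have hevR : ∀ x : ℂ, eval x R = x ^ M * ((1 - P) / P) := by
    intro x; rw [hR, eval_mul, eval_pow, eval_X, eval_C]
  set B : Finset ℂ := insert 0 (insert 1 (univ.image fun j => ξ j / (1 + ξ j))) with hB
  have hkey : ∀ x : ℂ, x ∉ B → eval x L = eval x R := by
    intro x hx
    have hx0 : x ≠ 0 := fun h => hx (by rw [hB, h]; exact mem_insert_self _ _)
    have hx1 : (1 : ℂ) - x ≠ 0 := by
      intro h
      have : x = 1 := by linear_combination -h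
      exact hx (by rw [hB, this]; exact mem_insert_of_mem (mem_insert_self _ _))
    have hxb : ∀ j, x - (1 - x) * ξ j ≠ 0 := by
      intro j h
      by_cases h1 : (1 : ℂ) + ξ j = 0
      · have hj : ξ j = -1 := by linear_combination h1
        rw [hj] at h
        exact one_ne_zero (α := ℂ) (by linear_combination h)
      · refine hx ?_
        have : x = ξ j / (1 + ξ j) := by
          rw [eq_div_iff h1]; linear_combination h
        rw [hB, this]
        exact mem_insert_of_mem (mem_insert_of_mem
          (mem_image.mpr ⟨j, mem_univ j, rfl⟩))
    rw [hevL x, hevR x, ← mul_div_assoc]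
    exact key M x (1 - x) (by ring) ξ hne hinj hx1 hx0 hxb
  have hLR : L = R := by
    apply Polynomial.eq_of_infinite_eval_eq
    apply Set.Infinite.mono _ (B.finite_toSet.infinite_compl)
    intro x hx
    exact hkey x (by simpa using hx)
  have h1 := congrArg (eval p) hLR
  rw [hevL p, hevR p] at h1
  simp only [Nat.add_sub_cancel]
  rw [mul_div_assoc]
  exact h1
end

section
/- For indeterminates ξ₁,…,ξ_N and parameters p,q with p+q=1, ∑_{σ∈S_N} sgn(σ) · ∏_{i<j}(p+qξ_{σ(i)}ξ_{σ(j)}−ξ_{σ(i)}) · ξ_{σ(2)}ξ_{σ(3)}²⋯ξ_{σ(N)}^{N−1} / [(1−ξ_{σ(1)}ξ_{σ(2)}⋯ξ_{σ(N)})(1−ξ_{σ(2)}⋯ξ_{σ(N)})⋯(1−ξ_{σ(N)})] = p^{N(N−1)/2} · ∏_{i<j}(ξ_j−ξ_i) / ∏_j(1−ξ_j). -/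
open Finset Polynomial


lemma prod_succAbove {n : ℕ} (m : Fin (n+1)) (g : Fin (n+1) → ℂ) :
    ∏ j : Fin n, g (m.succAbove j) = ∏ j ∈ univ.erase m, g j := by
  rw [show (∏ j ∈ univ.erase m, g j) = ∏ j ∈ Finset.image m.succAbove univ, g j by
    congr 1; ext x; simp [Fin.exists_succAbove_eq_iff, eq_comm, and_comm]]
  rw [Finset.prod_image (by intro a _ b _ h; exact Fin.succAbove_right_injective h)]

lemma Ici_succ_eq {n : ℕ} (k : Fin n) :
    Ici (Fin.succ k) = (Ici k).map ⟨Fin.succ, Fin.succ_injective n⟩ := by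
  ext x
  simp only [mem_Ici, Finset.mem_map, Function.Embedding.coeFn_mk]
  constructor
  · intro h
    cases x using Fin.cases with
    | zero =>
        exact absurd (Fin.le_zero_iff.mp h) (Fin.succ_ne_zero k)
    | succ x => exact ⟨x, Fin.succ_le_succ_iff.mp h, rfl⟩
  · rintro ⟨a, ha, rfl⟩
    exact Fin.succ_le_succ_iff.mpr ha

lemma prod_Ici_succ {n : ℕ} (k : Fin n) (g : Fin (n+1) → ℂ) :
    ∏ l ∈ Ici (Fin.succ k), g l = ∏ l ∈ Ici k, g l.succ := by
  rw [Ici_succ_eq, Finset.prod_map]; rfl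

lemma Ici_zero_fin {n : ℕ} : (Ici (0 : Fin (n+1))) = univ := by
  ext x; simp [Fin.zero_le]


lemma exists_castSucc_eq' {n : ℕ} {j : Fin (n+1)} (h : j ≠ Fin.last n) :
    ∃ j', Fin.castSucc j' = j := by
  rw [← Fin.succAbove_last]; exact Fin.exists_succAbove_eq_iff.mpr h

lemma erase_last_eq {n : ℕ} :
    (univ : Finset (Fin (n+1))).erase (Fin.last n) = univ.map Fin.castSuccEmb := by
  ext j
  constructor
  · intro hj
    obtain ⟨j', rfl⟩ := exists_castSucc_eq' (mem_erase.mp hj).1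
    exact mem_map.mpr ⟨j', mem_univ _, rfl⟩
  · intro hj
    obtain ⟨a, -, rfl⟩ := mem_map.mp hj
    exact mem_erase.mpr ⟨(Fin.castSucc_lt_last a).ne, mem_univ _⟩

lemma erase_castSucc_eq {n : ℕ} (m : Fin n) :
    (univ : Finset (Fin (n+1))).erase (Fin.castSucc m) =
      insert (Fin.last n) ((univ.erase m).map Fin.castSuccEmb) := by
  ext j
  constructor
  · intro hj
    have hne := (mem_erase.mp hj).1
    rcases eq_or_ne j (Fin.last n) with rfl | hjl
    · exact mem_insert_self _ _
    · obtain ⟨j', rfl⟩ := exists_castSucc_eq' hjl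
      refine mem_insert_of_mem (mem_map.mpr ⟨j', mem_erase.mpr ⟨?_, mem_univ _⟩, rfl⟩)
      exact fun hc => hne (by rw [hc])
  · intro hj
    rcases mem_insert.mp hj with rfl | hj
    · exact mem_erase.mpr ⟨(Fin.castSucc_lt_last m).ne', mem_univ _⟩
    · obtain ⟨a, ha, rfl⟩ := mem_map.mp hj
      exact mem_erase.mpr
        ⟨fun hc => (mem_erase.mp ha).1 (Fin.castSucc_injective _ hc), mem_univ _⟩

lemma last_not_mem_map_castSucc {n : ℕ} (s : Finset (Fin n)) :
    Fin.last n ∉ s.map Fin.castSuccEmb := by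
  intro h
  obtain ⟨a, -, ha⟩ := mem_map.mp h
  exact (Fin.castSucc_lt_last a).ne ha

lemma prod_neg_comm {n : ℕ} (s : Finset (Fin n)) (f : Fin n → ℂ) :
    ∏ j ∈ s, (-(f j)) = (-1) ^ s.card * ∏ j ∈ s, f j := by
  rw [show (fun j => -(f j)) = fun j => (-1 : ℂ) * f j by funext j; ring,
    Finset.prod_mul_distrib, Finset.prod_const]

lemma keyL : ∀ (n : ℕ) (p q : ℂ), p + q = 1 → ∀ (x : Fin n → ℂ), Function.Injective x →
    (∀ j, x j ≠ 1) →
    ∑ m : Fin n, ((1 - x m) * ∏ j ∈ univ.erase m,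
      ((p + q * x m * x j - x m) * x j / (x j - x m))) = p ^ (n - 1) * (1 - ∏ j, x j) := by
  intro n
  induction n with
  | zero => intro p q _ x _ _; simp
  | succ n IH =>
    intro p q hpq x hinj h1
    by_cases hz : ∃ k, x k = 0
    · -- some variable is zero
      obtain ⟨k, hk⟩ := hz
      rw [Finset.sum_eq_single_of_mem k (mem_univ k) (fun b _ hbk => by
        rw [Finset.prod_eq_zero (mem_erase.mpr ⟨Ne.symm hbk, mem_univ k⟩)
          (by rw [hk, mul_zero, zero_div]), mul_zero])]
      have h2 : ∏ j ∈ univ.erase k, ((p + q * x k * x j - x k) * x j / (x j - x k)) = p ^ n := by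
        have hcong : ∀ j ∈ univ.erase k,
            ((p + q * x k * x j - x k) * x j / (x j - x k)) = p := by
          intro j hj
          have hxj : x j ≠ 0 := fun h => (mem_erase.mp hj).1 (hinj (h.trans hk.symm))
          rw [hk, show (p + q * 0 * x j - 0) = p by ring, sub_zero, mul_div_assoc,
            div_self hxj, mul_one]
        rw [Finset.prod_congr rfl hcong, Finset.prod_const,
          card_erase_of_mem (mem_univ k), card_univ, Fintype.card_fin, Nat.add_sub_cancel]
      rw [h2, hk, Finset.prod_eq_zero (mem_univ k) hk]
      simp
    · push_neg at hz
      set t := x (Fin.last n) with ht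
      set y : Fin n → ℂ := fun j => x (Fin.castSucc j) with hy
      have hcs : ∀ j : Fin n, x (Fin.castSucc j) = y j := fun j => rfl
      have hyinj : Function.Injective y := fun a b hab => Fin.castSucc_injective _ (hinj hab)
      have hy1 : ∀ j, y j ≠ 1 := fun j => h1 _
      have hy0 : ∀ j, y j ≠ 0 := fun j => hz _
      have hty : ∀ j, t ≠ y j := fun j h => (Fin.castSucc_lt_last j).ne' (hinj h)
      have ht1 : t ≠ 1 := h1 _
      set c : Fin n → ℂ := fun m => (1 - y m) * ∏ j ∈ univ.erase m,
        ((p + q * y m * y j - y m) * y j / (y j - y m)) with hc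
      set A : ℂ[X] := (∑ m : Fin n, C (c m) * ((C (p - y m) + C (q * y m) * X) *
          (X * ∏ j ∈ univ.erase m, (X - C (y j))))) +
        C ((-1 : ℂ)^n * ∏ j, y j) *
          ((1 - X) * ∏ j : Fin n, (C p - C (1 - q * y j) * X)) with hA
      set B : ℂ[X] := C (p ^ n) *
        ((1 - C (∏ j, y j) * X) * ∏ j : Fin n, (X - C (y j))) with hB
      have evalA : ∀ z : ℂ, A.eval z =
          (∑ m : Fin n, c m * ((p - y m + q * y m * z) *
            (z * ∏ j ∈ univ.erase m, (z - y j)))) +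
          (-1 : ℂ)^n * (∏ j, y j) * ((1 - z) * ∏ j : Fin n, (p - (1 - q * y j) * z)) := by
        intro z
        simp [hA, eval_finset_sum, eval_prod]
      have evalB : ∀ z : ℂ, B.eval z =
          p^n * ((1 - (∏ j, y j) * z) * ∏ j : Fin n, (z - y j)) := by
        intro z; simp [hB, eval_prod]
      have hBroot : ∀ k : Fin n, B.eval (y k) = 0 := by
        intro k
        rw [evalB, show (∏ j : Fin n, (y k - y j)) = 0 from
          Finset.prod_eq_zero (mem_univ k) (sub_self (y k)), mul_zero, mul_zero]
      have hAroot : ∀ k : Fin n, A.eval (y k) = 0 := by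
        intro k
        have hn : 0 < n := k.pos
        rw [evalA]
        rw [Finset.sum_eq_single_of_mem k (mem_univ k) (fun m _ hmk => by
          rw [show (∏ j ∈ univ.erase m, (y k - y j)) = 0 from
            Finset.prod_eq_zero (mem_erase.mpr ⟨Ne.symm hmk, mem_univ k⟩) (sub_self (y k)),
            mul_zero, mul_zero, mul_zero])]
        have comb : (∏ j ∈ univ.erase k, ((p + q * y k * y j - y k) * y j / (y j - y k))) *
            (∏ j ∈ univ.erase k, (y k - y j)) =
            (-1 : ℂ)^(n-1) * ∏ j ∈ univ.erase k, ((p + q * y k * y j - y k) * y j) := by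
          rw [← Finset.prod_mul_distrib,
            Finset.prod_congr rfl (fun j hj => show
              ((p + q * y k * y j - y k) * y j / (y j - y k)) * (y k - y j)
                = -((p + q * y k * y j - y k) * y j) from by
              have hjk : y j - y k ≠ 0 :=
                sub_ne_zero.mpr (fun h => (mem_erase.mp hj).1 (hyinj h))
              field_simp
              ring),
            prod_neg_comm, card_erase_of_mem (mem_univ k), card_univ, Fintype.card_fin]
        have hFull : ((p + q * y k * y k - y k) * y k) *
            (∏ j ∈ univ.erase k, ((p + q * y k * y j - y k) * y j)) =
            ∏ j : Fin n, ((p + q * y k * y j - y k) * y j) := by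
          rw [Finset.mul_prod_erase univ (fun j => (p + q * y k * y j - y k) * y j)
            (mem_univ k)]
        have hsecond : (∏ j : Fin n, (p - (1 - q * y j) * y k)) =
            ∏ j : Fin n, (p + q * y k * y j - y k) :=
          Finset.prod_congr rfl (fun j _ => by ring)
        have hFY : (∏ j : Fin n, (p + q * y k * y j - y k)) * (∏ j : Fin n, y j) =
            ∏ j : Fin n, ((p + q * y k * y j - y k) * y j) :=
          (Finset.prod_mul_distrib).symm
        have hsign : (-1 : ℂ)^n = -(-1 : ℂ)^(n-1) := by
          have h : n - 1 + 1 = n := by omega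
          calc (-1 : ℂ)^n = (-1 : ℂ)^(n-1+1) := by rw [h]
          _ = (-1 : ℂ)^(n-1) * (-1) := pow_succ _ _
          _ = -(-1 : ℂ)^(n-1) := by ring
        simp only [hc]
        rw [hsecond, hsign]
        linear_combination (p + q * y k * y k - y k) * y k * (1 - y k) * comb +
          (1 - y k) * (-1:ℂ)^(n-1) * hFull - (1 - y k) * (-1:ℂ)^(n-1) * hFY
      have h01 : A.eval 0 = B.eval 0 := by
        rw [evalA, evalB]
        have e1 : ∀ m ∈ (univ : Finset (Fin n)), c m * ((p - y m + q * y m * 0) *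
            ((0:ℂ) * ∏ j ∈ univ.erase m, ((0:ℂ) - y j))) = 0 := by
          intro m _; rw [zero_mul, mul_zero, mul_zero]
        rw [Finset.sum_congr rfl e1, Finset.sum_const, smul_zero, zero_add]
        have e2 : (∏ j : Fin n, (p - (1 - q * y j) * 0)) = p ^ n := by
          rw [Finset.prod_congr rfl (fun j _ => by ring : ∀ j ∈ univ,
            p - (1 - q * y j) * 0 = p), Finset.prod_const, card_univ, Fintype.card_fin]
        have e3 : (∏ j : Fin n, ((0:ℂ) - y j)) = (-1:ℂ)^n * ∏ j, y j := by
          rw [Finset.prod_congr rfl (fun j _ => zero_sub (y j)), prod_neg_comm,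
            card_univ, Fintype.card_fin]
        rw [e2, e3]
        ring
      have h11 : A.eval 1 = B.eval 1 := by
        rw [evalA, evalB]
        have e1 : ∀ m ∈ (univ : Finset (Fin n)), c m * ((p - y m + q * y m * 1) *
            ((1:ℂ) * ∏ j ∈ univ.erase m, ((1:ℂ) - y j))) =
            (p * ∏ j : Fin n, (1 - y j)) * c m := by
          intro m _
          have h2 : p - y m + q * y m * 1 = p * (1 - y m) := by linear_combination (y m) * hpq
          have h3 : (1 - y m) * ∏ j ∈ univ.erase m, ((1:ℂ) - y j) =
              ∏ j : Fin n, ((1:ℂ) - y j) := by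
            rw [Finset.mul_prod_erase univ (fun j => 1 - y j) (mem_univ m)]
          rw [h2]
          linear_combination p * c m * h3
        rw [Finset.sum_congr rfl e1, ← Finset.mul_sum]
        have hIH : ∑ m : Fin n, c m = p ^ (n - 1) * (1 - ∏ j, y j) := IH p q hpq y hyinj hy1
        rw [hIH, sub_self, zero_mul, mul_zero, add_zero]
        rcases Nat.eq_zero_or_pos n with rfl | hn
        · simp
        · have hp : p * p ^ (n-1) = p ^ n := by
            have h : n - 1 + 1 = n := by omega
            calc p * p ^ (n-1) = p ^ (n-1) * p := by ring
            _ = p ^ (n-1+1) := (pow_succ _ _).symm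
            _ = p ^ n := by rw [h]
          linear_combination (∏ j : Fin n, (1 - y j)) * (1 - ∏ j : Fin n, y j) * hp
      have hXC : ∀ (s : Finset (Fin n)) (v : Fin n → ℂ),
          (∏ j ∈ s, (X - C (v j))).natDegree ≤ s.card := by
        intro s v
        refine le_trans (Polynomial.natDegree_prod_le s _) ?_
        refine le_trans (Finset.sum_le_sum (fun j _ => Polynomial.natDegree_X_sub_C_le (v j))) ?_
        simp
      have hdeg : (A - B).natDegree < n + 2 := by
        have hBd : B.natDegree ≤ n + 1 := by
          rw [hB]
          refine le_trans (Polynomial.natDegree_mul_le) ?_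
          rw [Polynomial.natDegree_C]
          refine le_trans (Nat.zero_add _).le ?_
          refine le_trans (Polynomial.natDegree_mul_le) ?_
          have b1 : (1 - C (∏ j : Fin n, y j) * X).natDegree ≤ 1 := by
            refine le_trans (Polynomial.natDegree_sub_le _ _) ?_
            simp only [Polynomial.natDegree_one]
            refine max_le (Nat.zero_le _) ?_
            refine le_trans (Polynomial.natDegree_mul_le) ?_
            simp only [Polynomial.natDegree_C, Polynomial.natDegree_X]
            omega
          have b2 := hXC univ y
          rw [card_univ, Fintype.card_fin] at b2
          omega
        have hAd : A.natDegree ≤ n + 1 := by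
          rw [hA]
          refine le_trans (Polynomial.natDegree_add_le _ _) (max_le ?_ ?_)
          · refine Polynomial.natDegree_sum_le_of_forall_le _ _ (fun m _ => ?_)
            have hn : 0 < n := m.pos
            refine le_trans (Polynomial.natDegree_mul_le) ?_
            rw [Polynomial.natDegree_C]
            have b1 : (C (p - y m) + C (q * y m) * X).natDegree ≤ 1 := by
              refine le_trans (Polynomial.natDegree_add_le _ _) ?_
              refine max_le (by simp only [Polynomial.natDegree_C]; omega) ?_
              refine le_trans (Polynomial.natDegree_mul_le) ?_
              simp only [Polynomial.natDegree_C, Polynomial.natDegree_X]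
              omega
            have b2 : (X * ∏ j ∈ univ.erase m, (X - C (y j))).natDegree ≤ n := by
              refine le_trans (Polynomial.natDegree_mul_le) ?_
              have := hXC (univ.erase m) y
              rw [card_erase_of_mem (mem_univ m), card_univ, Fintype.card_fin] at this
              have hx := Polynomial.natDegree_X_le (R := ℂ)
              omega
            have := Polynomial.natDegree_mul_le (p := C (p - y m) + C (q * y m) * X)
              (q := X * ∏ j ∈ univ.erase m, (X - C (y j)))
            omega
          · refine le_trans (Polynomial.natDegree_mul_le) ?_
            rw [Polynomial.natDegree_C]
            have b1 : ((1 : ℂ[X]) - X).natDegree ≤ 1 := by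
              refine le_trans (Polynomial.natDegree_sub_le _ _) ?_
              simp only [Polynomial.natDegree_one, Polynomial.natDegree_X]
              omega
            have b2 : (∏ j : Fin n, (C p - C (1 - q * y j) * X)).natDegree ≤ n := by
              refine le_trans (Polynomial.natDegree_prod_le _ _) ?_
              refine le_trans (Finset.sum_le_sum (fun j _ => show
                  (C p - C (1 - q * y j) * X).natDegree ≤ 1 from ?_)) (by simp)
              refine le_trans (Polynomial.natDegree_sub_le _ _) ?_
              refine max_le (by simp only [Polynomial.natDegree_C]; omega) ?_
              refine le_trans (Polynomial.natDegree_mul_le) ?_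
              simp only [Polynomial.natDegree_C, Polynomial.natDegree_X]
              omega
            have := Polynomial.natDegree_mul_le
              (p := (1 : ℂ[X]) - X) (q := ∏ j : Fin n, (C p - C (1 - q * y j) * X))
            omega
        have := Polynomial.natDegree_sub_le A B
        omega
      have hAB : A = B := by
        have hs : ((univ.image y) ∪ {0, 1} : Finset ℂ).card = n + 2 := by
          rw [Finset.card_union_of_disjoint (Finset.disjoint_left.mpr ?_),
            Finset.card_image_of_injective _ hyinj, card_univ, Fintype.card_fin,
            Finset.card_pair (by norm_num : (0:ℂ) ≠ 1)]
          intro a ha hmem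
          obtain ⟨k, -, rfl⟩ := Finset.mem_image.mp ha
          rcases Finset.mem_insert.mp hmem with h | h
          · exact hy0 k h
          · exact hy1 k (Finset.mem_singleton.mp h)
        refine sub_eq_zero.mp (Polynomial.eq_zero_of_natDegree_lt_card_of_eval_eq_zero'
          (A - B) ((univ.image y) ∪ {0,1}) ?_ (by rw [hs]; exact hdeg))
        intro i hi
        rcases Finset.mem_union.mp hi with hi | hi
        · obtain ⟨k, -, rfl⟩ := Finset.mem_image.mp hi
          rw [Polynomial.eval_sub, hAroot, hBroot, sub_zero]
        · rcases Finset.mem_insert.mp hi with rfl | hi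
          · rw [Polynomial.eval_sub, h01, sub_self]
          · rw [Finset.mem_singleton.mp hi, Polynomial.eval_sub, h11, sub_self]
      have hDt : ∏ j : Fin n, (t - y j) ≠ 0 :=
        Finset.prod_ne_zero_iff.mpr fun j _ => sub_ne_zero.mpr (hty j)
      have ht' := congrArg (Polynomial.eval t) hAB
      rw [evalA, evalB] at ht'
      rw [Nat.add_sub_cancel]
      apply mul_right_cancel₀ hDt
      have hprodx : ∏ j : Fin (n+1), x j = (∏ j : Fin n, y j) * t := by
        rw [Fin.prod_univ_castSucc]
      have hsplit : (∑ m : Fin (n+1), (1 - x m) * ∏ j ∈ univ.erase m,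
            ((p + q * x m * x j - x m) * x j / (x j - x m))) * (∏ j : Fin n, (t - y j)) =
          (∑ m : Fin n, c m * ((p - y m + q * y m * t) *
            (t * ∏ j ∈ univ.erase m, (t - y j)))) +
          ((-1 : ℂ)^n * ∏ j, y j) * ((1 - t) * ∏ j : Fin n, (p - (1 - q * y j) * t)) := by
        rw [Fin.sum_univ_castSucc, add_mul, Finset.sum_mul]
        congr 1
        · refine Finset.sum_congr rfl (fun m _ => ?_)
          rw [erase_castSucc_eq m, Finset.prod_insert (last_not_mem_map_castSucc _),
            Finset.prod_map]
          simp only [Fin.coe_castSuccEmb, Function.Embedding.coeFn_mk, hcs, ← ht]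
          rw [show (∏ j : Fin n, (t - y j)) =
            (t - y m) * ∏ j ∈ univ.erase m, (t - y j) from
            (Finset.mul_prod_erase univ (fun j => t - y j) (mem_univ m)).symm]
          simp only [hc]
          have htm : t - y m ≠ 0 := sub_ne_zero.mpr (hty m)
          set PP := ∏ j ∈ univ.erase m, ((p + q * y m * y j - y m) * y j / (y j - y m)) with hPP
          set QQ := ∏ j ∈ univ.erase m, (t - y j) with hQQ
          field_simp
          ring
        · rw [erase_last_eq, Finset.prod_map]
          simp only [Fin.coe_castSuccEmb, Function.Embedding.coeFn_mk, hcs, ← ht]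
          rw [mul_assoc, ← Finset.prod_mul_distrib,
            Finset.prod_congr rfl (fun j _ => show
              ((p + q * t * y j - t) * y j / (y j - t)) * (t - y j)
                = -((p - (1 - q * y j) * t) * y j) from by
              have hjt : y j - t ≠ 0 := sub_ne_zero.mpr (fun h => hty j h.symm)
              field_simp
              ring),
            prod_neg_comm, card_univ, Fintype.card_fin, Finset.prod_mul_distrib]
          ring
      rw [hprodx, hsplit]
      linear_combination ht'


def Emap (n : ℕ) : Fin (n+1) × Equiv.Perm (Fin n) → Equiv.Perm (Fin (n+1)) :=
  fun mt => (Equiv.Perm.decomposeFin.symm (0, mt.2)).trans (Fin.cycleRange mt.1).symm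

lemma Emap_zero {n : ℕ} (m : Fin (n+1)) (τ : Equiv.Perm (Fin n)) :
    Emap n (m, τ) 0 = m := by
  simp [Emap, Equiv.Perm.decomposeFin_symm_apply_zero]

lemma Emap_succ {n : ℕ} (m : Fin (n+1)) (τ : Equiv.Perm (Fin n)) (i : Fin n) :
    Emap n (m, τ) i.succ = m.succAbove (τ i) := by
  simp [Emap, Equiv.Perm.decomposeFin_symm_apply_succ]

lemma Emap_sign {n : ℕ} (m : Fin (n+1)) (τ : Equiv.Perm (Fin n)) :
    ((Equiv.Perm.sign (Emap n (m, τ)) : ℤ) : ℂ)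
      = (-1 : ℂ) ^ (m : ℕ) * ((Equiv.Perm.sign τ : ℤ) : ℂ) := by
  have h : Emap n (m, τ) = (Fin.cycleRange m).symm * (Equiv.Perm.decomposeFin.symm (0, τ)) := rfl
  rw [h, Equiv.Perm.sign_mul, Equiv.Perm.sign_symm, Fin.sign_cycleRange,
    Equiv.Perm.decomposeFin.symm_sign, if_pos rfl, one_mul]
  push_cast
  simp

lemma Emap_bijective (n : ℕ) : Function.Bijective (Emap n) := by
  rw [Fintype.bijective_iff_injective_and_card]
  constructor
  · rintro ⟨m, τ⟩ ⟨m', τ'⟩ h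
    have h0 : m = m' := by
      have := congrArg (fun σ : Equiv.Perm (Fin (n+1)) => σ 0) h
      simpa [Emap_zero] using this
    subst h0
    have hτ : τ = τ' := by
      apply Equiv.ext; intro i
      have := congrArg (fun σ : Equiv.Perm (Fin (n+1)) => σ i.succ) h
      simp only [Emap_succ] at this
      exact Fin.succAbove_right_injective this
    rw [hτ]
  · rw [Fintype.card_prod, Fintype.card_perm, Fintype.card_perm, Fintype.card_fin,
      Fintype.card_fin, Nat.factorial_succ]


lemma vandermonde_split {n : ℕ} (ξ : Fin (n+1) → ℂ) (m : Fin (n+1)) :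
    (∏ i, ∏ j ∈ Ioi i, (ξ j - ξ i)) =
    (-1 : ℂ) ^ (m : ℕ) * (∏ j : Fin n, (ξ (m.succAbove j) - ξ m)) *
      ∏ i : Fin n, ∏ j ∈ Ioi i, (ξ (m.succAbove j) - ξ (m.succAbove i)) := by
  have h1 : Matrix.vandermonde (fun i => ξ ((Fin.cycleRange m).symm i)) =
      (Matrix.vandermonde ξ).submatrix ((Fin.cycleRange m).symm : Equiv.Perm (Fin (n+1))) id := by
    ext i j
    simp [Matrix.vandermonde_apply, Matrix.submatrix_apply]
  have h2 := Matrix.det_permute ((Fin.cycleRange m).symm : Equiv.Perm (Fin (n+1)))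
    (Matrix.vandermonde ξ)
  rw [← h1] at h2
  rw [Matrix.det_vandermonde, Matrix.det_vandermonde] at h2
  -- h2 : ∏∏ (η j - η i) = sign * ∏∏ (ξ j - ξ i)
  have hsign : ((Equiv.Perm.sign ((Fin.cycleRange m).symm : Equiv.Perm (Fin (n+1))) : ℤ) : ℂ)
      = (-1 : ℂ) ^ (m : ℕ) := by
    rw [Equiv.Perm.sign_symm, Fin.sign_cycleRange]
    push_cast
    simp
  -- split η-vandermonde at index 0
  have h3 : (∏ i : Fin (n+1), ∏ j ∈ Ioi i,
        (ξ ((Fin.cycleRange m).symm j) - ξ ((Fin.cycleRange m).symm i))) =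
      (∏ j : Fin n, (ξ (m.succAbove j) - ξ m)) *
        ∏ i : Fin n, ∏ j ∈ Ioi i, (ξ (m.succAbove j) - ξ (m.succAbove i)) := by
    rw [Fin.prod_univ_succ]
    congr 1
    · rw [Fin.prod_Ioi_zero]
      exact Finset.prod_congr rfl (fun j _ => by
        rw [Fin.cycleRange_symm_succ, Fin.cycleRange_symm_zero])
    · exact Finset.prod_congr rfl (fun i _ => by
        rw [Fin.prod_Ioi_succ]
        exact Finset.prod_congr rfl (fun j _ => by
          rw [Fin.cycleRange_symm_succ, Fin.cycleRange_symm_succ]))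
  rw [h3] at h2
  -- h2 : A * B = (sign : ℂ?) * V ; note coercion in det_permute is Perm.sign cast to ℂ
  rw [hsign] at h2
  have hmm : ((-1 : ℂ) ^ (m : ℕ)) * ((-1 : ℂ) ^ (m : ℕ)) = 1 := by
    rw [← pow_add]
    exact Even.neg_one_pow ⟨(m : ℕ), rfl⟩
  calc (∏ i, ∏ j ∈ Ioi i, (ξ j - ξ i))
      = ((-1 : ℂ) ^ (m : ℕ) * (-1 : ℂ) ^ (m : ℕ)) * (∏ i, ∏ j ∈ Ioi i, (ξ j - ξ i)) := by
        rw [hmm, one_mul]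
    _ = (-1 : ℂ) ^ (m : ℕ) * (∏ j : Fin n, (ξ (m.succAbove j) - ξ m)) *
        ∏ i : Fin n, ∏ j ∈ Ioi i, (ξ (m.succAbove j) - ξ (m.succAbove i)) := by
        rw [mul_assoc, ← h2]; ring


lemma hd_to_hS {N : ℕ} (ξ : Fin N → ℂ)
    (hd : ∀ σ : Equiv.Perm (Fin N), ∀ k : Fin N, (∏ l ∈ Ici k, ξ (σ l)) ≠ 1) :
    ∀ S : Finset (Fin N), S.Nonempty → (∏ l ∈ S, ξ l) ≠ 1 := by
  intro S hSne
  have hcard : 1 ≤ S.card := Finset.card_pos.mpr hSne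
  have hSle : S.card ≤ N := le_trans (Finset.card_le_univ S)
    (by simp)
  have hNpos : 0 < N := lt_of_lt_of_le hcard hSle
  set k : Fin N := ⟨N - S.card, by omega⟩ with hk
  have hIci : (Ici k).card = S.card := by
    rw [Fin.card_Ici]
    show N - (N - S.card) = S.card
    omega
  let e := Finset.equivOfCardEq hIci
  let σ : Equiv.Perm (Fin N) := Equiv.extendSubtype e
  have himg : Finset.image σ (Ici k) = S := by
    apply Finset.eq_of_subset_of_card_le
    · intro x hx
      obtain ⟨a, ha, rfl⟩ := Finset.mem_image.mp hx
      exact Equiv.extendSubtype_mem e a ha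
    · rw [Finset.card_image_of_injective _ σ.injective, hIci]
  have hprod : ∏ l ∈ Ici k, ξ (σ l) = ∏ l ∈ S, ξ l := by
    rw [← himg, Finset.prod_image (fun a _ b _ h => σ.injective h)]
  rw [← hprod]
  exact hd σ k

set_option maxHeartbeats 1600000 in
theorem aux : ∀ (n : ℕ) (p q : ℂ), p + q = 1 → ∀ ξ : Fin (n+1) → ℂ,
    (∀ S : Finset (Fin (n+1)), S.Nonempty → (∏ l ∈ S, ξ l) ≠ 1) →
    ∑ σ : Equiv.Perm (Fin (n+1)),
      ((Equiv.Perm.sign σ : ℤ) : ℂ) *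
        ((∏ i : Fin (n+1), ∏ j ∈ Ioi i, (p + q * ξ (σ i) * ξ (σ j) - ξ (σ i))) *
          (∏ k : Fin (n+1), ξ (σ k) ^ (k : ℕ)) /
            ∏ k : Fin (n+1), (1 - ∏ l ∈ Ici k, ξ (σ l)))
      = p ^ ((n+1) * n / 2) *
          (∏ i : Fin (n+1), ∏ j ∈ Ioi i, (ξ j - ξ i)) / ∏ j, (1 - ξ j) := by
  intro n
  induction n with
  | zero =>
    intro p q hpq ξ hS
    haveI : Subsingleton (Equiv.Perm (Fin 1)) :=
      ⟨fun a b => Equiv.ext fun i => Subsingleton.elim _ _⟩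
    rw [Fintype.sum_subsingleton _ 1]
    simp only [Equiv.Perm.sign_one, Equiv.Perm.one_apply]
    norm_num
    rw [Fin.prod_univ_one, Fin.prod_univ_one, Fin.prod_univ_one, Fin.prod_univ_one,
      show (Ioi (0 : Fin 1)) = ∅ by decide, show (Ici (0 : Fin 1)) = {0} by decide]
    simp
  | succ n IH =>
    intro p q hpq ξ hS
    by_cases hinj : Function.Injective ξ
    · -- injective case
      have hxj1 : ∀ j : Fin (n+2), ξ j ≠ 1 := fun j => by
        have := hS {j} (singleton_nonempty j); rwa [prod_singleton] at this
      have h1j : ∀ j : Fin (n+2), (1:ℂ) - ξ j ≠ 0 := fun j => sub_ne_zero.mpr (Ne.symm (hxj1 j))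
      have hU : (1 : ℂ) - ∏ l, ξ l ≠ 0 := sub_ne_zero.mpr (Ne.symm (hS univ univ_nonempty))
      have hD : (∏ j : Fin (n+2), (1 - ξ j)) ≠ 0 :=
        Finset.prod_ne_zero_iff.mpr (fun j _ => h1j j)
      set f : Equiv.Perm (Fin (n+2)) → ℂ := fun σ =>
        ((Equiv.Perm.sign σ : ℤ) : ℂ) *
        ((∏ i : Fin (n+2), ∏ j ∈ Ioi i, (p + q * ξ (σ i) * ξ (σ j) - ξ (σ i))) *
          (∏ k : Fin (n+2), ξ (σ k) ^ (k : ℕ)) /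
            ∏ k : Fin (n+2), (1 - ∏ l ∈ Ici k, ξ (σ l))) with hf
      rw [← Fintype.sum_bijective (Emap (n+1)) (Emap_bijective (n+1))
        (fun mt => f (Emap (n+1) mt)) f (fun mt => rfl), Fintype.sum_prod_type]
      have hstep : ∀ m : Fin (n+2),
          ∑ τ : Equiv.Perm (Fin (n+1)), f (Emap (n+1) (m, τ)) =
          ((-1:ℂ)^(m:ℕ) * (∏ j : Fin (n+1), (p + q * ξ m * ξ (m.succAbove j) - ξ m)) *
            (∏ j : Fin (n+1), ξ (m.succAbove j)) / (1 - ∏ l, ξ l)) *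
          (p ^ ((n+1) * n / 2) *
            (∏ i : Fin (n+1), ∏ j ∈ Ioi i, (ξ (m.succAbove j) - ξ (m.succAbove i))) /
            ∏ j : Fin (n+1), (1 - ξ (m.succAbove j))) := by
        intro m
        have hSm : ∀ S : Finset (Fin (n+1)), S.Nonempty →
            (∏ l ∈ S, ξ (m.succAbove l)) ≠ 1 := by
          intro S hSne
          rw [← Finset.prod_image (fun a _ b _ h => Fin.succAbove_right_injective h)]
          exact hS _ (hSne.image _)
        have htrans : ∀ τ : Equiv.Perm (Fin (n+1)), f (Emap (n+1) (m, τ)) =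
            ((-1:ℂ)^(m:ℕ) * (∏ j : Fin (n+1), (p + q * ξ m * ξ (m.succAbove j) - ξ m)) *
              (∏ j : Fin (n+1), ξ (m.succAbove j)) / (1 - ∏ l, ξ l)) *
            (((Equiv.Perm.sign τ : ℤ) : ℂ) *
              ((∏ i : Fin (n+1), ∏ j ∈ Ioi i, (p + q * ξ (m.succAbove (τ i)) *
                  ξ (m.succAbove (τ j)) - ξ (m.succAbove (τ i)))) *
               (∏ k : Fin (n+1), ξ (m.succAbove (τ k)) ^ (k : ℕ)) /
               ∏ k : Fin (n+1), (1 - ∏ l ∈ Ici k, ξ (m.succAbove (τ l))))) := by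
          intro τ
          simp only [hf]
          rw [Emap_sign]
          have hP1 : (∏ i : Fin (n+2), ∏ j ∈ Ioi i,
              (p + q * ξ (Emap (n+1) (m,τ) i) * ξ (Emap (n+1) (m,τ) j)
                - ξ (Emap (n+1) (m,τ) i)))
              = (∏ j : Fin (n+1), (p + q * ξ m * ξ (m.succAbove j) - ξ m)) *
                ∏ i : Fin (n+1), ∏ j ∈ Ioi i,
                  (p + q * ξ (m.succAbove (τ i)) * ξ (m.succAbove (τ j))
                    - ξ (m.succAbove (τ i))) := by
            rw [Fin.prod_univ_succ]
            congr 1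
            · rw [Fin.prod_Ioi_zero]
              calc ∏ j : Fin (n+1), (p + q * ξ (Emap (n+1) (m,τ) 0) *
                    ξ (Emap (n+1) (m,τ) j.succ) - ξ (Emap (n+1) (m,τ) 0))
                  = ∏ j : Fin (n+1), (p + q * ξ m * ξ (m.succAbove (τ j)) - ξ m) :=
                    Finset.prod_congr rfl (fun j _ => by rw [Emap_zero, Emap_succ])
                _ = ∏ j : Fin (n+1), (p + q * ξ m * ξ (m.succAbove j) - ξ m) :=
                    Equiv.prod_comp τ (fun j => (p + q * ξ m * ξ (m.succAbove j) - ξ m))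
            · exact Finset.prod_congr rfl (fun i _ => by
                rw [Fin.prod_Ioi_succ]
                exact Finset.prod_congr rfl (fun j _ => by rw [Emap_succ, Emap_succ]))
          have hP2 : (∏ k : Fin (n+2), ξ (Emap (n+1) (m,τ) k) ^ (k : ℕ))
              = (∏ j : Fin (n+1), ξ (m.succAbove j)) *
                ∏ k : Fin (n+1), ξ (m.succAbove (τ k)) ^ (k : ℕ) := by
            rw [Fin.prod_univ_succ, show (((0 : Fin (n+2))) : ℕ) = 0 from rfl, pow_zero,
              one_mul]
            calc ∏ k : Fin (n+1), ξ (Emap (n+1) (m,τ) k.succ) ^ ((k.succ : Fin (n+2)) : ℕ)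
                = ∏ k : Fin (n+1), (ξ (m.succAbove (τ k)) ^ (k:ℕ) * ξ (m.succAbove (τ k))) :=
                  Finset.prod_congr rfl (fun k _ => by rw [Emap_succ, Fin.val_succ, pow_succ])
              _ = (∏ k : Fin (n+1), ξ (m.succAbove (τ k)) ^ (k:ℕ)) *
                   ∏ k : Fin (n+1), ξ (m.succAbove (τ k)) := Finset.prod_mul_distrib
              _ = (∏ j : Fin (n+1), ξ (m.succAbove j)) *
                   ∏ k : Fin (n+1), ξ (m.succAbove (τ k)) ^ (k:ℕ) := by
                  rw [Equiv.prod_comp τ (fun j => ξ (m.succAbove j))]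
                  ring
          have hP3 : (∏ k : Fin (n+2), (1 - ∏ l ∈ Ici k, ξ (Emap (n+1) (m,τ) l)))
              = (1 - ∏ l, ξ l) * ∏ k : Fin (n+1),
                  (1 - ∏ l ∈ Ici k, ξ (m.succAbove (τ l))) := by
            rw [Fin.prod_univ_succ]
            congr 1
            · rw [Ici_zero_fin, Equiv.prod_comp (Emap (n+1) (m,τ)) ξ]
            · exact Finset.prod_congr rfl (fun k _ => by
                rw [prod_Ici_succ]
                congr 1
                exact Finset.prod_congr rfl (fun l _ => by rw [Emap_succ]))
          rw [hP1, hP2, hP3]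
          simp only [div_eq_mul_inv, mul_inv]
          ring
        have hIH2 : ∑ τ : Equiv.Perm (Fin (n+1)), ((Equiv.Perm.sign τ : ℤ) : ℂ) *
            ((∏ i : Fin (n+1), ∏ j ∈ Ioi i, (p + q * ξ (m.succAbove (τ i)) *
                ξ (m.succAbove (τ j)) - ξ (m.succAbove (τ i)))) *
             (∏ k : Fin (n+1), ξ (m.succAbove (τ k)) ^ (k : ℕ)) /
             ∏ k : Fin (n+1), (1 - ∏ l ∈ Ici k, ξ (m.succAbove (τ l)))) =
            p ^ ((n+1) * n / 2) *
              (∏ i : Fin (n+1), ∏ j ∈ Ioi i, (ξ (m.succAbove j) - ξ (m.succAbove i))) /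
              ∏ j : Fin (n+1), (1 - ξ (m.succAbove j)) :=
          IH p q hpq (fun j => ξ (m.succAbove j)) hSm
        rw [Finset.sum_congr rfl (fun τ _ => htrans τ), ← Finset.mul_sum, hIH2]
      rw [Finset.sum_congr rfl (fun m _ => hstep m)]
      have hterm : ∀ m ∈ (univ : Finset (Fin (n+2))),
          ((-1:ℂ)^(m:ℕ) * (∏ j : Fin (n+1), (p + q * ξ m * ξ (m.succAbove j) - ξ m)) *
            (∏ j : Fin (n+1), ξ (m.succAbove j)) / (1 - ∏ l, ξ l)) *
          (p ^ ((n+1) * n / 2) *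
            (∏ i : Fin (n+1), ∏ j ∈ Ioi i, (ξ (m.succAbove j) - ξ (m.succAbove i))) /
            ∏ j : Fin (n+1), (1 - ξ (m.succAbove j))) =
          (p ^ ((n+1) * n / 2) * (∏ i : Fin (n+2), ∏ j ∈ Ioi i, (ξ j - ξ i)) /
            ((1 - ∏ l, ξ l) * ∏ j : Fin (n+2), (1 - ξ j))) *
          ((1 - ξ m) * ∏ j ∈ univ.erase m,
            ((p + q * ξ m * ξ j - ξ m) * ξ j / (ξ j - ξ m))) := by
        intro m _
        have hPm : (∏ j : Fin (n+1), (ξ (m.succAbove j) - ξ m)) ≠ 0 :=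
          Finset.prod_ne_zero_iff.mpr (fun j _ =>
            sub_ne_zero.mpr (fun h => Fin.succAbove_ne m j (hinj h)))
        have hDm : (∏ j : Fin (n+1), (1 - ξ (m.succAbove j))) ≠ 0 :=
          Finset.prod_ne_zero_iff.mpr (fun j _ => h1j _)
        have hconv : ∏ j ∈ univ.erase m, ((p + q * ξ m * ξ j - ξ m) * ξ j / (ξ j - ξ m)) =
            (∏ j : Fin (n+1), (p + q * ξ m * ξ (m.succAbove j) - ξ m)) *
              (∏ j : Fin (n+1), ξ (m.succAbove j)) /
              (∏ j : Fin (n+1), (ξ (m.succAbove j) - ξ m)) := by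
          rw [← prod_succAbove m (fun j => (p + q * ξ m * ξ j - ξ m) * ξ j / (ξ j - ξ m)),
            Finset.prod_div_distrib, Finset.prod_mul_distrib]
        have hDsplit : (∏ j : Fin (n+2), (1 - ξ j)) =
            (1 - ξ m) * ∏ j : Fin (n+1), (1 - ξ (m.succAbove j)) :=
          Fin.prod_univ_succAbove (fun j => 1 - ξ j) m
        rw [hconv, hDsplit, vandermonde_split ξ m]
        have h1m : (1 : ℂ) - ξ m ≠ 0 := h1j m
        field_simp
      rw [Finset.sum_congr rfl hterm, ← Finset.mul_sum,
        keyL (n+2) p q hpq ξ hinj hxj1]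
      have hexp : (n+2) * (n+1) / 2 = (n+1) * n / 2 + (n+1) := by
        rw [show (n+2) * (n+1) = (n+1) * n + (n+1) * 2 by ring,
          Nat.add_mul_div_right _ _ (by norm_num : 0 < 2)]
      rw [hexp, pow_add, show n + 2 - 1 = n + 1 from rfl]
      field_simp
    · -- non-injective: both sides vanish
      rw [Function.not_injective_iff] at hinj
      obtain ⟨i, j, hij, hne⟩ := hinj
      have hV : (∏ i' : Fin (n+2), ∏ j' ∈ Ioi i', (ξ j' - ξ i')) = 0 := by
        rcases hne.lt_or_gt with h | h
        · exact Finset.prod_eq_zero (mem_univ i)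
            (Finset.prod_eq_zero (Finset.mem_Ioi.mpr h) (by rw [hij, sub_self]))
        · exact Finset.prod_eq_zero (mem_univ j)
            (Finset.prod_eq_zero (Finset.mem_Ioi.mpr h) (by rw [hij, sub_self]))
      rw [hV, mul_zero, zero_div]
      have hswap : ∀ x, ξ (Equiv.swap i j x) = ξ x := by
        intro x
        rcases eq_or_ne x i with rfl | hxi
        · rw [Equiv.swap_apply_left]; exact hij.symm
        rcases eq_or_ne x j with rfl | hxj
        · rw [Equiv.swap_apply_right]; exact hij
        · rw [Equiv.swap_apply_of_ne_of_ne hxi hxj]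
      set f : Equiv.Perm (Fin (n+2)) → ℂ := fun σ =>
        ((Equiv.Perm.sign σ : ℤ) : ℂ) *
        ((∏ i' : Fin (n+2), ∏ j' ∈ Ioi i', (p + q * ξ (σ i') * ξ (σ j') - ξ (σ i'))) *
          (∏ k : Fin (n+2), ξ (σ k) ^ (k : ℕ)) /
            ∏ k : Fin (n+2), (1 - ∏ l ∈ Ici k, ξ (σ l))) with hf
      have key : ∀ σ, f (Equiv.swap i j * σ) = - f σ := by
        intro σ
        simp only [hf, Equiv.Perm.mul_apply, hswap, Equiv.Perm.sign_mul,
          Equiv.Perm.sign_swap hne]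
        push_cast
        ring
      have hre : ∑ σ : Equiv.Perm (Fin (n+2)), f σ =
          ∑ σ : Equiv.Perm (Fin (n+2)), f (Equiv.swap i j * σ) :=
        (Fintype.sum_equiv (Equiv.mulLeft (Equiv.swap i j))
          (fun σ => f (Equiv.swap i j * σ)) f (fun σ => rfl)).symm
      have h2 : ∑ σ : Equiv.Perm (Fin (n+2)), f σ = - ∑ σ : Equiv.Perm (Fin (n+2)), f σ :=
        calc ∑ σ : Equiv.Perm (Fin (n+2)), f σ
            = ∑ σ : Equiv.Perm (Fin (n+2)), f (Equiv.swap i j * σ) := hre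
          _ = ∑ σ : Equiv.Perm (Fin (n+2)), - f σ :=
              Finset.sum_congr rfl (fun σ _ => key σ)
          _ = - ∑ σ : Equiv.Perm (Fin (n+2)), f σ := by rw [Finset.sum_neg_distrib]
      have h3 : (2 : ℂ) * ∑ σ : Equiv.Perm (Fin (n+2)), f σ = 0 := by linear_combination h2
      rcases mul_eq_zero.mp h3 with h | h
      · norm_num at h
      · exact h


theorem stmt_1 (N : ℕ) (hN : 1 ≤ N) (p q : ℂ) (hpq : p + q = 1)
    (ξ : Fin N → ℂ) (h1 : ∀ j, ξ j ≠ 1)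
    (hd : ∀ σ : Equiv.Perm (Fin N), ∀ k : Fin N, (∏ l ∈ Ici k, ξ (σ l)) ≠ 1) :
    ∑ σ : Equiv.Perm (Fin N),
      ((Equiv.Perm.sign σ : ℤ) : ℂ) *
        ((∏ i : Fin N, ∏ j ∈ Ioi i, (p + q * ξ (σ i) * ξ (σ j) - ξ (σ i))) *
          (∏ k : Fin N, ξ (σ k) ^ (k : ℕ)) /
            ∏ k : Fin N, (1 - ∏ l ∈ Ici k, ξ (σ l)))
      = p ^ (N * (N - 1) / 2) *
          (∏ i : Fin N, ∏ j ∈ Ioi i, (ξ j - ξ i)) / ∏ j, (1 - ξ j) := by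
  obtain ⟨n, rfl⟩ : ∃ n, N = n + 1 := ⟨N - 1, by omega⟩
  exact aux n p q hpq ξ (hd_to_hS ξ hd)
end

section
/- For indeterminates ξ₁,…,ξ_N and parameters p,q with p+q=1, ∑_{σ∈S_N} sgn(σ) · ∏_{i<j}(p+qξ_{σ(i)}ξ_{σ(j)}−ξ_{σ(i)}) / [(ξ_{σ(1)}−1)(ξ_{σ(1)}ξ_{σ(2)}−1)⋯(ξ_{σ(1)}ξ_{σ(2)}⋯ξ_{σ(N)}−1)] = q^{N(N−1)/2} · ∏_{i<j}(ξ_j−ξ_i) / ∏_j(ξ_j−1). -/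
open Finset Function Equiv

noncomputable section

def ff (q x y : ℂ) : ℂ := 1 - q + q * x * y - x

def Vd {k : ℕ} (η : Fin k → ℂ) : ℂ := ∏ i, ∏ j ∈ Ioi i, (η j - η i)

-- interval lemmas
lemma Iic_last_eq (n : ℕ) : Iic (Fin.last n) = univ := by
  ext x; simp [Fin.le_last]

lemma Iic_castSucc_eq {n : ℕ} (k : Fin n) :
    Iic (Fin.castSucc k) = (Iic k).map ⟨Fin.castSucc, Fin.castSucc_injective n⟩ := by
  ext x
  simp only [mem_Iic, mem_map, Function.Embedding.coeFn_mk]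
  constructor
  · intro hx
    have hxlt : x < Fin.last n := lt_of_le_of_lt hx (Fin.castSucc_lt_last k)
    refine ⟨x.castPred hxlt.ne, Fin.le_def.2 ?_, by simp⟩
    have h1 := Fin.le_def.1 hx
    simp only [Fin.coe_castSucc] at h1
    rw [Fin.coe_castPred]; exact h1
  · rintro ⟨y, hy, rfl⟩
    exact Fin.castSucc_le_castSucc_iff.2 hy

lemma Ioi_castSucc_eq {n : ℕ} (i : Fin n) :
    Ioi (Fin.castSucc i) =
      insert (Fin.last n) ((Ioi i).map ⟨Fin.castSucc, Fin.castSucc_injective n⟩) := by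
  ext x
  simp only [mem_Ioi, mem_insert, mem_map, Function.Embedding.coeFn_mk]
  constructor
  · intro hx
    rcases eq_or_ne x (Fin.last n) with h | h
    · exact Or.inl h
    · refine Or.inr ⟨x.castPred h, Fin.lt_def.2 ?_, by simp⟩
      have h1 := Fin.lt_def.1 hx
      simp only [Fin.coe_castSucc] at h1
      rw [Fin.coe_castPred]; exact h1
  · rintro (rfl | ⟨y, hy, rfl⟩)
    · exact Fin.castSucc_lt_last i
    · exact Fin.castSucc_lt_castSucc_iff.2 hy

lemma Ioi_last_eq (n : ℕ) : Ioi (Fin.last n) = ∅ := by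
  ext x; simp [Fin.le_last, not_lt]

-- pair split
lemma pair_split {n : ℕ} (g : Fin (n+1) → Fin (n+1) → ℂ) :
    (∏ i, ∏ j ∈ Ioi i, g i j) =
      (∏ i : Fin n, ∏ j ∈ Ioi i, g (Fin.castSucc i) (Fin.castSucc j)) *
        ∏ i : Fin n, g (Fin.castSucc i) (Fin.last n) := by
  rw [Fin.prod_univ_castSucc]
  rw [Ioi_last_eq, prod_empty, mul_one, ← prod_mul_distrib]
  congr 1; funext i
  rw [Ioi_castSucc_eq, prod_insert (by simp [Fin.ext_iff]; intro x _ h; exact absurd h (by omega)), prod_map, mul_comm]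
  rfl

lemma Vd_snoc {n : ℕ} (η : Fin n → ℂ) (t : ℂ) :
    Vd (Fin.snoc η t) = (∏ j, (t - η j)) * Vd η := by
  rw [Vd, pair_split]
  simp only [Fin.snoc_castSucc, Fin.snoc_last]
  rw [mul_comm]; rfl


lemma Ioi_succAbove_eq {n : ℕ} (a : Fin (n+1)) (i : Fin n) :
    Ioi (a.succAbove i) =
      (if a.succAbove i < a then insert a else id) ((Ioi i).map a.succAboveEmb) := by
  ext j
  by_cases h : a.succAbove i < a <;>
    simp only [h, if_true, if_false, id_eq, mem_insert, mem_Ioi, mem_map,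
      Fin.succAboveEmb, Embedding.coeFn_mk]
  · constructor
    · intro hj
      rcases eq_or_ne j a with rfl | hne
      · exact Or.inl rfl
      · obtain ⟨j', rfl⟩ := Fin.exists_succAbove_eq hne
        exact Or.inr ⟨j', Fin.succAbove_lt_succAbove_iff.1 hj, rfl⟩
    · rintro (rfl | ⟨j', hj', rfl⟩)
      · exact h
      · exact Fin.succAbove_lt_succAbove_iff.2 hj'
  · constructor
    · intro hj
      have hne : j ≠ a := by
        intro rfl0
        subst rfl0
        have := lt_of_le_of_lt (le_of_not_gt h) hj
        exact lt_irrefl _ this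
      obtain ⟨j', rfl⟩ := Fin.exists_succAbove_eq hne
      exact ⟨j', Fin.succAbove_lt_succAbove_iff.1 hj, rfl⟩
    · rintro ⟨j', hj', rfl⟩
      exact Fin.succAbove_lt_succAbove_iff.2 hj'

lemma prod_filter_succAbove_lt {n : ℕ} (a : Fin (n+1)) (F : Fin (n+1) → ℂ) :
    (∏ x ∈ univ.filter (fun x => a.succAbove x < a), F (a.succAbove x)) =
      ∏ x ∈ Iio a, F x := by
  refine prod_nbij a.succAbove (fun x hx => ?_) (fun x _ y _ h => Fin.succAbove_right_injective h)
    (fun y hy => ?_) (fun x _ => rfl)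
  · simp only [mem_filter] at hx; exact mem_Iio.2 hx.2
  · simp only [Set.mem_image, mem_coe, mem_Iio] at *
    obtain ⟨x, rfl⟩ := Fin.exists_succAbove_eq (ne_of_lt hy)
    exact ⟨x, by simp [hy], rfl⟩

lemma prod_filter_succAbove_ge {n : ℕ} (a : Fin (n+1)) (F : Fin (n+1) → ℂ) :
    (∏ x ∈ univ.filter (fun x => ¬ a.succAbove x < a), F (a.succAbove x)) =
      ∏ x ∈ Ioi a, F x := by
  refine prod_nbij a.succAbove (fun x hx => ?_) (fun x _ y _ h => Fin.succAbove_right_injective h)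
    (fun y hy => ?_) (fun x _ => rfl)
  · simp only [mem_filter] at hx
    exact mem_Ioi.2 (lt_of_le_of_ne (le_of_not_gt hx.2) (Fin.ne_succAbove a x))
  · simp only [Set.mem_image, mem_coe, mem_Ioi] at *
    obtain ⟨x, rfl⟩ := Fin.exists_succAbove_eq (ne_of_gt hy)
    exact ⟨x, by simp [not_lt_of_gt hy, le_of_lt hy], rfl⟩

lemma prod_succAbove_split {n : ℕ} (a : Fin (n+1)) (F : Fin (n+1) → ℂ) :
    (∏ x : Fin n, F (a.succAbove x)) =
      (∏ x ∈ Iio a, F x) * ∏ x ∈ Ioi a, F x := by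
  rw [← prod_filter_mul_prod_filter_not univ (fun x => a.succAbove x < a),
    prod_filter_succAbove_lt, prod_filter_succAbove_ge]

lemma Vd_remove {n : ℕ} (η : Fin (n+1) → ℂ) (a : Fin (n+1)) :
    Vd η = (-1:ℂ)^(n - (a:ℕ)) * (∏ x : Fin n, (η a - η (a.succAbove x))) *
      Vd (η ∘ a.succAbove) := by
  classical
  have key : ∀ i : Fin n,
      (∏ j ∈ Ioi (a.succAbove i), (η j - η (a.succAbove i))) =
        (if a.succAbove i < a then (η a - η (a.succAbove i)) else 1) *
          ∏ j ∈ Ioi i, (η (a.succAbove j) - η (a.succAbove i)) := by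
    intro i
    rw [Ioi_succAbove_eq]
    by_cases h : a.succAbove i < a
    · rw [if_pos h, if_pos h, prod_insert (by
        simp only [mem_map, Fin.succAboveEmb, Embedding.coeFn_mk, not_exists, not_and]
        intro x _
        exact Fin.succAbove_ne a x), prod_map]
      rfl
    · rw [if_neg h, if_neg h, id_eq, one_mul, prod_map]
      rfl
  rw [Vd, Fin.prod_univ_succAbove (fun i => ∏ j ∈ Ioi i, (η j - η i)) a]
  simp only [key]
  rw [prod_mul_distrib]
  have h1 : (∏ i : Fin n, if a.succAbove i < a then (η a - η (a.succAbove i)) else 1)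
      = ∏ x ∈ Iio a, (η a - η x) := by
    rw [prod_ite, prod_const_one, mul_one]
    exact prod_filter_succAbove_lt a (fun x => η a - η x)
  have h2 : (∏ j ∈ Ioi a, (η j - η a)) = (-1:ℂ)^(n - (a:ℕ)) * ∏ j ∈ Ioi a, (η a - η j) := by
    have : ∀ j ∈ Ioi a, η j - η a = (-1) * (η a - η j) := by intro j _; ring
    rw [prod_congr rfl this, prod_mul_distrib, prod_const]
    congr 2
    rw [Fin.card_Ioi]
    omega
  rw [h1, h2, prod_succAbove_split a (fun x => η a - η x)]
  unfold Vd
  simp only [comp_apply]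
  ring

def KeyEq (n : ℕ) (q : ℂ) (ξ : Fin (n+1) → ℂ) : Prop :=
  ∑ m : Fin (n+1), (-1:ℂ)^((m:ℕ)+n) * (ξ m - 1) *
      (∏ x : Fin n, ff q (ξ (m.succAbove x)) (ξ m)) * Vd (ξ ∘ m.succAbove)
    = q^n * ((∏ x, ξ x) - 1) * Vd ξ

lemma key_zero (q : ℂ) (ξ : Fin 1 → ℂ) : KeyEq 0 q ξ := by
  simp [KeyEq, Vd]

def EK (n : ℕ) (q : ℂ) (η : Fin (n+1) → ℂ) (t : ℂ) : Prop :=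
  (t - 1) * (∏ x, ff q (η x) t) * Vd η
    + ∑ m' : Fin (n+1), (-1:ℂ)^((m':ℕ)+(n+1)) * (η m' - 1) *
        (ff q t (η m') * ∏ x : Fin n, ff q (η (m'.succAbove x)) (η m'))
        * ((∏ j : Fin n, (t - η (m'.succAbove j))) * Vd (η ∘ m'.succAbove))
  = q^(n+1) * ((∏ x, η x) * t - 1) * ((∏ j, (t - η j)) * Vd η)

lemma snoc_comp_succAbove_castSucc {n : ℕ} (η : Fin (n+1) → ℂ) (t : ℂ) (m : Fin (n+1)) :
    (Fin.snoc η t : Fin (n+2) → ℂ) ∘ (Fin.castSucc m).succAbove =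
      Fin.snoc (η ∘ m.succAbove) t := by
  funext x
  refine Fin.lastCases ?_ (fun x' => ?_) x
  · have h : (Fin.castSucc m).succAbove (Fin.last n) = Fin.last (n+1) := by
      rw [Fin.succAbove_of_le_castSucc _ _ (Fin.castSucc_le_castSucc_iff.2 (Fin.le_last m)),
        Fin.succ_last]
    simp [h]
  · simp [comp_apply, Fin.castSucc_succAbove_castSucc]

lemma key_succ_iff (n : ℕ) (q t : ℂ) (η : Fin (n+1) → ℂ) :
    KeyEq (n+1) q (Fin.snoc η t) ↔ EK n q η t := by
  have hL : (∑ m : Fin (n+2), (-1:ℂ)^((m:ℕ)+(n+1)) * ((Fin.snoc η t : Fin (n+2) → ℂ) m - 1) *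
      (∏ x : Fin (n+1), ff q ((Fin.snoc η t : Fin (n+2) → ℂ) (m.succAbove x)) ((Fin.snoc η t : Fin (n+2) → ℂ) m)) *
      Vd ((Fin.snoc η t : Fin (n+2) → ℂ) ∘ m.succAbove))
      = (t - 1) * (∏ x, ff q (η x) t) * Vd η
        + ∑ m' : Fin (n+1), (-1:ℂ)^((m':ℕ)+(n+1)) * (η m' - 1) *
            (ff q t (η m') * ∏ x : Fin n, ff q (η (m'.succAbove x)) (η m'))
            * ((∏ j : Fin n, (t - η (m'.succAbove j))) * Vd (η ∘ m'.succAbove)) := by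
    rw [Fin.sum_univ_castSucc]
    rw [add_comm]
    congr 1
    · -- last term
      have h1 : (-1:ℂ)^(((Fin.last (n+1) : Fin (n+2)):ℕ)+(n+1)) = 1 :=
        Even.neg_one_pow (by simp only [Fin.val_last]; exact ⟨n+1, by omega⟩)
      rw [h1, Fin.succAbove_last, Fin.snoc_last, Fin.snoc_comp_castSucc]
      simp only [Fin.snoc_castSucc, one_mul]
    · -- castSucc terms
      refine Finset.sum_congr rfl (fun m' _ => ?_)
      have h2 : (Fin.castSucc m').succAbove (Fin.last n) = Fin.last (n+1) := by
        rw [Fin.succAbove_of_le_castSucc _ _ (Fin.castSucc_le_castSucc_iff.2 (Fin.le_last m')),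
          Fin.succ_last]
      rw [snoc_comp_succAbove_castSucc, Vd_snoc]
      rw [Fin.prod_univ_castSucc (fun x => ff q ((Fin.snoc η t : Fin (n+2) → ℂ) ((Fin.castSucc m').succAbove x))
        ((Fin.snoc η t : Fin (n+2) → ℂ) (Fin.castSucc m')))]
      simp only [Fin.castSucc_succAbove_castSucc, Fin.snoc_castSucc, h2, Fin.snoc_last,
        Fin.coe_castSucc, comp_apply]
      ring
  have hR : (q^(n+1) * ((∏ x, (Fin.snoc η t : Fin (n+2) → ℂ) x) - 1) * Vd (Fin.snoc η t : Fin (n+2) → ℂ))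
      = q^(n+1) * ((∏ x, η x) * t - 1) * ((∏ j, (t - η j)) * Vd η) := by
    rw [Fin.prod_univ_castSucc]
    simp only [Fin.snoc_castSucc, Fin.snoc_last]
    rw [Vd_snoc]
  rw [KeyEq, EK, hL, hR]

lemma neg_one_pow_sub (n a : ℕ) (h : a ≤ n) : (-1:ℂ)^(n-a) = (-1:ℂ)^(n+a) := by
  have hna : n + a = (n - a) + 2*a := by omega
  rw [hna, pow_add, pow_mul]
  norm_num

lemma EK_at_one (n : ℕ) (q : ℂ) (η : Fin (n+1) → ℂ) (IH : KeyEq n q η) : EK n q η 1 := by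
  unfold EK
  have hterm : ∀ m' : Fin (n+1),
      (-1:ℂ)^((m':ℕ)+(n+1)) * (η m' - 1) *
        (ff q 1 (η m') * ∏ x : Fin n, ff q (η (m'.succAbove x)) (η m'))
        * ((∏ j : Fin n, ((1:ℂ) - η (m'.succAbove j))) * Vd (η ∘ m'.succAbove))
      = (q * ∏ x, (1 - η x)) * ((-1:ℂ)^((m':ℕ)+n) * (η m' - 1) *
          (∏ x : Fin n, ff q (η (m'.succAbove x)) (η m')) * Vd (η ∘ m'.succAbove)) := by
    intro m'
    have hff : ff q 1 (η m') = q * (η m' - 1) := by unfold ff; ring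
    have hsplit : (∏ x, ((1:ℂ) - η x)) =
        (1 - η m') * ∏ j : Fin n, ((1:ℂ) - η (m'.succAbove j)) :=
      Fin.prod_univ_succAbove (fun x => 1 - η x) m'
    have he : (m':ℕ)+(n+1) = ((m':ℕ)+n)+1 := rfl
    rw [hff, hsplit, he, pow_succ]
    ring
  simp only [hterm]
  rw [← Finset.mul_sum, IH]
  ring

lemma EK_at_eta (n : ℕ) (q : ℂ) (η : Fin (n+1) → ℂ) (a : Fin (n+1)) : EK n q η (η a) := by
  unfold EK
  have hRz : (∏ j, (η a - η j)) = 0 := prod_eq_zero (mem_univ a) (by ring)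
  have hsum : (∑ m' : Fin (n+1), (-1:ℂ)^((m':ℕ)+(n+1)) * (η m' - 1) *
        (ff q (η a) (η m') * ∏ x : Fin n, ff q (η (m'.succAbove x)) (η m'))
        * ((∏ j : Fin n, (η a - η (m'.succAbove j))) * Vd (η ∘ m'.succAbove)))
      = (-1:ℂ)^((a:ℕ)+(n+1)) * (η a - 1) *
        (ff q (η a) (η a) * ∏ x : Fin n, ff q (η (a.succAbove x)) (η a))
        * ((∏ j : Fin n, (η a - η (a.succAbove j))) * Vd (η ∘ a.succAbove)) := by
    refine Finset.sum_eq_single_of_mem a (mem_univ a) (fun m' _ hb => ?_)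
    obtain ⟨j, hj⟩ := Fin.exists_succAbove_eq (show a ≠ m' from hb.symm)
    rw [show (∏ j : Fin n, (η a - η (m'.succAbove j))) = 0 from
      prod_eq_zero (mem_univ j) (by rw [hj]; ring)]
    ring
  rw [hsum, hRz, Fin.prod_univ_succAbove (fun x => ff q (η x) (η a)) a, Vd_remove η a,
    neg_one_pow_sub n a (by omega)]
  have he : (a:ℕ)+(n+1) = ((n:ℕ)+a)+1 := by omega
  rw [he, pow_succ]
  ring

open Polynomial in
lemma EK_generic (n : ℕ) (q : ℂ) (η : Fin (n+1) → ℂ) (hinj : Function.Injective η)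
    (hone : ∀ i, η i ≠ 1) (IH : KeyEq n q η) (t : ℂ) : EK n q η t := by
  classical
  set L : Polynomial ℂ := ∏ x : Fin (n+1), (C (q * η x) * X + C (1 - q - η x)) with hLdef
  set M : Polynomial ℂ := ∏ j : Fin (n+1), (X - C (η j)) with hMdef
  set D : Polynomial ℂ :=
    (X - 1) * L * C (Vd η)
    + (∑ m' : Fin (n+1),
        C ((-1:ℂ)^((m':ℕ)+(n+1)) * (η m' - 1) * (∏ x : Fin n, ff q (η (m'.succAbove x)) (η m'))
            * Vd (η ∘ m'.succAbove)) *
          ((C (q * η m' - 1) * X + C (1 - q)) * ∏ j : Fin n, (X - C (η (m'.succAbove j)))))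
    - C (q^(n+1)) * (C (∏ x, η x) * X - 1) * M * C (Vd η) with hDdef
  have heval : ∀ s : ℂ, D.eval s =
      ((s - 1) * (∏ x, ff q (η x) s) * Vd η
        + ∑ m' : Fin (n+1), (-1:ℂ)^((m':ℕ)+(n+1)) * (η m' - 1) *
            (ff q s (η m') * ∏ x : Fin n, ff q (η (m'.succAbove x)) (η m'))
            * ((∏ j : Fin n, (s - η (m'.succAbove j))) * Vd (η ∘ m'.succAbove)))
      - q^(n+1) * ((∏ x, η x) * s - 1) * ((∏ j, (s - η j)) * Vd η) := by
    intro s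
    simp only [hDdef, hLdef, hMdef, eval_add, eval_sub, eval_mul, eval_prod, eval_finset_sum,
      eval_C, eval_X, eval_one, eval_pow]
    have hprodff : (∏ x, (q * η x * s + (1 - q - η x))) = ∏ x, ff q (η x) s :=
      prod_congr rfl fun x _ => by unfold ff; ring
    have hsum : (∑ m' : Fin (n+1),
        ((-1:ℂ)^((m':ℕ)+(n+1)) * (η m' - 1) * (∏ x : Fin n, ff q (η (m'.succAbove x)) (η m'))
            * Vd (η ∘ m'.succAbove)) *
          (((q * η m' - 1) * s + (1 - q)) * ∏ j : Fin n, (s - η (m'.succAbove j))))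
        = ∑ m' : Fin (n+1), (-1:ℂ)^((m':ℕ)+(n+1)) * (η m' - 1) *
            (ff q s (η m') * ∏ x : Fin n, ff q (η (m'.succAbove x)) (η m'))
            * ((∏ j : Fin n, (s - η (m'.succAbove j))) * Vd (η ∘ m'.succAbove)) :=
      sum_congr rfl fun m' _ => by unfold ff; ring
    rw [hprodff, hsum]
    ring
  have hLdeg : L.natDegree ≤ n+1 := by
    rw [hLdef]
    refine le_trans (natDegree_prod_le _ _) (le_trans (Finset.sum_le_card_nsmul _ _ 1
      (fun x _ => natDegree_linear_le)) (by simp))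
  have hMdeg : M.natDegree ≤ n+1 := by
    rw [hMdef]
    refine le_trans (natDegree_prod_le _ _) (le_trans (Finset.sum_le_card_nsmul _ _ 1
      (fun x _ => natDegree_X_sub_C_le _)) (by simp))
  have hLcoeff : L.coeff (n+1) = ∏ x : Fin (n+1), (q * η x) := by
    have := coeff_prod_of_natDegree_le (s := (univ : Finset (Fin (n+1))))
      (fun x => C (q * η x) * X + C (1 - q - η x)) 1 (fun p _ => natDegree_linear_le)
    simp only [card_univ, Fintype.card_fin, mul_one] at this
    rw [hLdef, this]
    refine prod_congr rfl fun x _ => ?_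
    simp [coeff_add, coeff_C_mul, coeff_X_one, coeff_C, coeff_one]
  have hMcoeff : M.coeff (n+1) = 1 := by
    have := coeff_prod_of_natDegree_le (s := (univ : Finset (Fin (n+1))))
      (fun j => X - C (η j)) 1 (fun p _ => natDegree_X_sub_C_le _)
    simp only [card_univ, Fintype.card_fin, mul_one] at this
    rw [hMdef, this]
    refine (prod_congr rfl fun x _ => ?_).trans (prod_const_one)
    simp [coeff_sub, coeff_C]
  have hDdeg : D.natDegree ≤ n+2 := by
    refine le_trans (natDegree_sub_le _ _) (max_le (le_trans (natDegree_add_le _ _) (max_le ?_ ?_)) ?_)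
    · refine le_trans (natDegree_mul_le) ?_
      simp only [natDegree_C, add_zero]
      refine le_trans (natDegree_mul_le) ?_
      have hx1 : (X - 1 : Polynomial ℂ).natDegree ≤ 1 := by
        simpa using natDegree_X_sub_C_le (1:ℂ)
      omega
    · refine natDegree_sum_le_of_forall_le _ _ (fun m' _ => ?_)
      refine le_trans (natDegree_mul_le) ?_
      simp only [natDegree_C, zero_add]
      refine le_trans (natDegree_mul_le) ?_
      have h1 : (C (q * η m' - 1) * X + C (1 - q)).natDegree ≤ 1 := natDegree_linear_le
      have h2 : (∏ j : Fin n, (X - C (η (m'.succAbove j)))).natDegree ≤ n := by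
        refine le_trans (natDegree_prod_le _ _) (le_trans (Finset.sum_le_card_nsmul _ _ 1
          (fun x _ => natDegree_X_sub_C_le _)) (by simp))
      omega
    · refine le_trans (natDegree_mul_le) ?_
      simp only [natDegree_C, add_zero]
      refine le_trans (natDegree_mul_le) ?_
      have h1 : (C (q^(n+1)) * (C (∏ x, η x) * X - 1)).natDegree ≤ 1 := by
        refine le_trans (natDegree_mul_le) ?_
        simp only [natDegree_C, zero_add]
        refine le_trans (natDegree_sub_le _ _) (max_le ?_ ?_)
        · exact le_trans (natDegree_C_mul_le _ _) (by simp)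
        · simp
      omega
  have hDtop : D.coeff (n+2) = 0 := by
    simp only [hDdef, coeff_sub, coeff_add, finset_sum_coeff, coeff_mul_C]
    have e1 : ((X - 1) * L).coeff (n+2) = L.coeff (n+1) := by
      have : (X - 1 : Polynomial ℂ) * L = X * L - L := by ring
      rw [this, coeff_sub, coeff_X_mul,
        show L.coeff (n+2) = 0 from coeff_eq_zero_of_natDegree_lt (by omega), sub_zero]
    have e2 : ∀ m' : Fin (n+1),
        (C ((-1:ℂ)^((m':ℕ)+(n+1)) * (η m' - 1) * (∏ x : Fin n, ff q (η (m'.succAbove x)) (η m'))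
            * Vd (η ∘ m'.succAbove)) *
          ((C (q * η m' - 1) * X + C (1 - q)) * ∏ j : Fin n, (X - C (η (m'.succAbove j))))).coeff (n+2)
          = 0 := by
      intro m'
      refine coeff_eq_zero_of_natDegree_lt ?_
      refine lt_of_le_of_lt (natDegree_mul_le) ?_
      simp only [natDegree_C, zero_add]
      refine lt_of_le_of_lt (natDegree_mul_le) ?_
      have h1 : (C (q * η m' - 1) * X + C (1 - q)).natDegree ≤ 1 := natDegree_linear_le
      have h2 : (∏ j : Fin n, (X - C (η (m'.succAbove j)))).natDegree ≤ n := by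
        refine le_trans (natDegree_prod_le _ _) ?_
        refine le_trans (Finset.sum_le_card_nsmul _ _ 1 (fun x _ => natDegree_X_sub_C_le _)) ?_
        simp
      omega
    have e3 : (C (q^(n+1)) * (C (∏ x, η x) * X - 1) * M).coeff (n+2)
        = q^(n+1) * (∏ x, η x) * M.coeff (n+1) := by
      have : C (q^(n+1)) * (C (∏ x, η x) * X - 1) * M
          = C (q^(n+1) * (∏ x, η x)) * (X * M) - C (q^(n+1)) * M := by
        simp only [C_mul]; ring
      rw [this, coeff_sub, coeff_C_mul, coeff_C_mul, coeff_X_mul,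
        coeff_eq_zero_of_natDegree_lt (show M.natDegree < n+2 by omega), mul_zero, sub_zero,
        mul_assoc]
    rw [e1, e3, hLcoeff, hMcoeff]
    simp only [e2]
    rw [Finset.sum_const_zero, prod_mul_distrib, prod_const, card_univ, Fintype.card_fin]
    ring
  have hD0 : D = 0 := by
    rcases eq_or_ne D 0 with h | h
    · exact h
    have hlt : D.natDegree < n + 2 := by
      rcases lt_or_eq_of_le hDdeg with h' | h'
      · exact h'
      · exfalso
        have := Polynomial.leadingCoeff_ne_zero.2 h
        rw [Polynomial.leadingCoeff, h'] at this
        exact this hDtop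
    refine eq_zero_of_natDegree_lt_card_of_eval_eq_zero D
      (f := (Fin.snoc η 1 : Fin (n+2) → ℂ)) ?_ ?_ (by simp; omega)
    · intro i j
      refine Fin.lastCases ?_ (fun i' => ?_) i <;> refine Fin.lastCases ?_ (fun j' => ?_) j <;>
        intro hij
      · rfl
      · rw [Fin.snoc_last, Fin.snoc_castSucc] at hij
        exact absurd hij.symm (hone j')
      · rw [Fin.snoc_last, Fin.snoc_castSucc] at hij
        exact absurd hij (hone i')
      · rw [Fin.snoc_castSucc, Fin.snoc_castSucc] at hij
        exact congrArg Fin.castSucc (hinj hij)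
    · intro i
      refine Fin.lastCases ?_ (fun a => ?_) i
      · rw [Fin.snoc_last, heval 1, sub_eq_zero]
        exact EK_at_one n q η IH
      · rw [Fin.snoc_castSucc, heval (η a), sub_eq_zero]
        exact EK_at_eta n q η a
  have h := heval t
  rw [hD0, eval_zero] at h
  exact sub_eq_zero.1 h.symm

lemma EK_all (n : ℕ) (q : ℂ) (IH : ∀ ξ : Fin (n+1) → ℂ, KeyEq n q ξ)
    (η : Fin (n+1) → ℂ) (t : ℂ) : EK n q η t := by
  classical
  set w : Fin (n+1) → ℂ := fun i => ((i:ℕ)+1 : ℂ) with hw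
  have hwinj : Function.Injective w := by
    intro i j h
    simp only [hw] at h
    have : ((i:ℕ):ℂ) = ((j:ℕ):ℂ) := by linear_combination h
    exact Fin.ext (by exact_mod_cast this)
  have hw0 : ∀ i, w i ≠ 0 := by
    intro i h
    simp only [hw] at h
    have : ((i:ℕ)+1:ℂ) ≠ 0 := by
      exact_mod_cast Nat.cast_add_one_ne_zero (R := ℂ) (i:ℕ)
    exact this h
  set G : (Fin (n+1) → ℂ) → ℂ := fun ζ =>
    ((t - 1) * (∏ x, ff q (ζ x) t) * Vd ζ
      + ∑ m' : Fin (n+1), (-1:ℂ)^((m':ℕ)+(n+1)) * (ζ m' - 1) *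
          (ff q t (ζ m') * ∏ x : Fin n, ff q (ζ (m'.succAbove x)) (ζ m'))
          * ((∏ j : Fin n, (t - ζ (m'.succAbove j))) * Vd (ζ ∘ m'.succAbove)))
      - q^(n+1) * ((∏ x, ζ x) * t - 1) * ((∏ j, (t - ζ j)) * Vd ζ) with hG
  have hEK : ∀ ζ : Fin (n+1) → ℂ, G ζ = 0 → EK n q ζ t := by
    intro ζ h
    have := sub_eq_zero.1 h
    exact this
  have hgen : ∀ ζ : Fin (n+1) → ℂ, Function.Injective ζ → (∀ i, ζ i ≠ 1) → G ζ = 0 := by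
    intro ζ h1 h2
    have := EK_generic n q ζ h1 h2 (IH ζ) t
    rw [EK] at this
    simp only [hG]
    rw [this, sub_self]
  -- bad set
  set S : Set ℂ :=
    (⋃ p : (Fin (n+1)) × (Fin (n+1)),
      if p.1 ≠ p.2 then {z : ℂ | η p.1 + z * w p.1 = η p.2 + z * w p.2} else ∅)
    ∪ ⋃ i : Fin (n+1), {z : ℂ | η i + z * w i = 1} with hS
  have hSfin : S.Finite := by
    refine Set.Finite.union (Set.finite_iUnion fun p => ?_) (Set.finite_iUnion fun i => ?_)
    · by_cases hp : p.1 ≠ p.2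
      · rw [if_pos hp]
        have hww : w p.1 - w p.2 ≠ 0 := sub_ne_zero.2 (fun h => hp (hwinj h))
        refine Set.Finite.subset (Set.finite_singleton ((η p.2 - η p.1)/(w p.1 - w p.2))) ?_
        intro z hz
        simp only [Set.mem_setOf_eq] at hz
        simp only [Set.mem_singleton_iff]
        field_simp
        linear_combination hz
      · rw [if_neg hp]
        exact Set.finite_empty
    · have : w i ≠ 0 := hw0 i
      refine Set.Finite.subset (Set.finite_singleton ((1 - η i)/(w i))) ?_
      intro z hz
      simp only [Set.mem_setOf_eq] at hz
      simp only [Set.mem_singleton_iff]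
      field_simp
      linear_combination hz
  have hzero : ∀ z : ℂ, z ∉ S → G (fun i => η i + z * w i) = 0 := by
    intro z hzS
    refine hgen _ ?_ ?_
    · intro i j hij
      by_contra hne
      apply hzS
      rw [hS]
      refine Set.mem_union_left _ ?_
      refine Set.mem_iUnion.2 ⟨(i, j), ?_⟩
      rw [if_pos hne]
      exact hij
    · intro i hi
      apply hzS
      rw [hS]
      refine Set.mem_union_right _ (Set.mem_iUnion.2 ⟨i, hi⟩)
  have hcont : Continuous G := by
    simp only [hG]
    unfold Vd ff
    fun_prop
  have hcomp : Continuous fun z : ℂ => G (fun i => η i + z * w i) := by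
    refine hcont.comp ?_
    fun_prop
  have hev : ∀ᶠ z in nhdsWithin (0:ℂ) {0}ᶜ, G (fun i => η i + z * w i) = 0 := by
    have hclosed : IsClosed (S \ {0}) := hSfin.diff.isClosed
    have hmem : (S \ {0})ᶜ ∈ nhds (0:ℂ) :=
      hclosed.isOpen_compl.mem_nhds (by simp)
    have h1 : ∀ᶠ z in nhdsWithin (0:ℂ) {0}ᶜ, z ∈ (S \ {0})ᶜ :=
      Filter.Eventually.filter_mono nhdsWithin_le_nhds (Filter.eventually_of_mem hmem fun z hz => hz)
    have h2 : ∀ᶠ z in nhdsWithin (0:ℂ) {0}ᶜ, z ∈ ({0}ᶜ : Set ℂ) := eventually_mem_nhdsWithin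
    filter_upwards [h1, h2] with z hz1 hz2
    refine hzero z ?_
    intro hzS
    exact hz1 ⟨hzS, hz2⟩
  have hη0 : (fun i => η i + (0:ℂ) * w i) = η := funext fun i => by ring
  have hlim : Filter.Tendsto (fun z : ℂ => G (fun i => η i + z * w i))
      (nhdsWithin (0:ℂ) {0}ᶜ) (nhds (G η)) := by
    have := hcomp.tendsto 0
    rw [hη0] at this
    exact this.mono_left nhdsWithin_le_nhds
  have hlim0 : Filter.Tendsto (fun z : ℂ => G (fun i => η i + z * w i))
      (nhdsWithin (0:ℂ) {0}ᶜ) (nhds 0) :=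
    Filter.Tendsto.congr' (Filter.EventuallyEq.symm hev) tendsto_const_nhds
  exact hEK η (tendsto_nhds_unique hlim hlim0)

theorem key_all : ∀ (n : ℕ) (q : ℂ) (ξ : Fin (n+1) → ℂ), KeyEq n q ξ := by
  intro n
  induction n with
  | zero => exact fun q ξ => key_zero q ξ
  | succ n IH =>
    intro q ξ
    have h := (key_succ_iff n q (ξ (Fin.last (n+1))) (Fin.init ξ)).2
      (EK_all n q (IH q) (Fin.init ξ) (ξ (Fin.last (n+1))))
    rwa [Fin.snoc_init_self] at h

def eP {n : ℕ} (m : Fin (n+1)) (σ' : Equiv.Perm (Fin n)) : Equiv.Perm (Fin (n+1)) :=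
  (finSuccEquivLast.trans (Equiv.optionCongr σ')).trans (finSuccEquiv' m).symm

@[simp] lemma eP_last {n : ℕ} (m : Fin (n+1)) (σ' : Equiv.Perm (Fin n)) :
    eP m σ' (Fin.last n) = m := by
  simp [eP, finSuccEquiv'_symm_none]

@[simp] lemma eP_castSucc {n : ℕ} (m : Fin (n+1)) (σ' : Equiv.Perm (Fin n)) (i : Fin n) :
    eP m σ' (Fin.castSucc i) = m.succAbove (σ' i) := by
  simp [eP, finSuccEquiv'_symm_some]

lemma eP_injective {n : ℕ} :
    Function.Injective (fun p : Fin (n+1) × Equiv.Perm (Fin n) => eP p.1 p.2) := by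
  rintro ⟨m₁, σ₁⟩ ⟨m₂, σ₂⟩ h
  simp only at h
  have hm : m₁ = m₂ := by
    have := congrArg (fun σ => σ (Fin.last n)) h
    simpa using this
  subst hm
  have hσ : σ₁ = σ₂ := by
    ext i
    have := congrArg (fun σ => σ (Fin.castSucc i)) h
    simp only [eP_castSucc] at this
    exact congrArg Fin.val (Fin.succAbove_right_injective this)
  rw [hσ]

lemma eP_bijective {n : ℕ} :
    Function.Bijective (fun p : Fin (n+1) × Equiv.Perm (Fin n) => eP p.1 p.2) := by
  rw [Fintype.bijective_iff_injective_and_card]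
  refine ⟨eP_injective, ?_⟩
  simp [Fintype.card_perm, Nat.factorial_succ]

lemma sign_eP {n : ℕ} (m : Fin (n+1)) (σ' : Equiv.Perm (Fin n)) :
    Equiv.Perm.sign (eP m σ') = (-1:ℤˣ)^((m:ℕ)+n) * Equiv.Perm.sign σ' := by
  have hdec : eP m σ' = eP m 1 * eP (Fin.last n) σ' := by
    ext x
    refine Fin.lastCases ?_ (fun i => ?_) x
    · simp [Equiv.Perm.mul_apply, Fin.succAbove_last]
    · simp [Equiv.Perm.mul_apply, Fin.succAbove_last]
  have hsig1 : Equiv.Perm.sign (eP (Fin.last n) σ') = Equiv.Perm.sign σ' := by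
    have : eP (Fin.last n) σ' =
        Equiv.permCongr finSuccEquivLast.symm (Equiv.optionCongr σ') := by
      ext x; rfl
    rw [this, Equiv.Perm.sign_permCongr, Equiv.optionCongr_sign]
  have hrot : Fin.cycleRange m * eP m 1 = finRotate (n+1) := by
    ext x
    refine Fin.lastCases ?_ (fun i => ?_) x
    · simp only [Equiv.Perm.mul_apply, eP_last, Fin.cycleRange_self, finRotate_last]
    · simp only [Equiv.Perm.mul_apply, eP_castSucc, Equiv.Perm.one_apply,
        Fin.cycleRange_succAbove, finRotate_succ_apply, Fin.coeSucc_eq_succ]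
  have hsig2 : Equiv.Perm.sign (eP m 1) = (-1:ℤˣ)^((m:ℕ)+n) := by
    have := congrArg Equiv.Perm.sign hrot
    rw [map_mul, Fin.sign_cycleRange, sign_finRotate] at this
    have h2 : Equiv.Perm.sign (eP m 1) = (-1:ℤˣ)^((m:ℕ)) * ((-1:ℤˣ)^((m:ℕ)) * Equiv.Perm.sign (eP m 1)) := by
      rw [← mul_assoc, ← pow_add]
      have : ((m:ℕ)+(m:ℕ)) = 2*(m:ℕ) := by omega
      rw [this, pow_mul]
      norm_num
    rw [h2, this, ← pow_add]
    rw [Nat.add_sub_cancel]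
  rw [hdec, map_mul, hsig1, hsig2]

lemma Iic_zero_fin {n : ℕ} : (Iic (0 : Fin (n+1))) = {0} := by
  ext x; simp [Fin.le_zero_iff]

theorem main_sum : ∀ (n : ℕ) (q : ℂ) (ξ : Fin (n+1) → ℂ),
    (∀ σ : Equiv.Perm (Fin (n+1)), ∀ k : Fin (n+1), (∏ l ∈ Iic k, ξ (σ l)) ≠ 1) →
    ∑ σ : Equiv.Perm (Fin (n+1)), ((Equiv.Perm.sign σ : ℤ) : ℂ) *
        ((∏ i, ∏ j ∈ Ioi i, ff q (ξ (σ i)) (ξ (σ j))) / ∏ k, ((∏ l ∈ Iic k, ξ (σ l)) - 1))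
      = q ^ ((n+1) * n / 2) * Vd ξ / ∏ j, (ξ j - 1) := by
  intro n
  induction n with
  | zero =>
    intro q ξ hd
    have huniv : (univ : Finset (Equiv.Perm (Fin 1))) = {1} :=
      Finset.eq_singleton_iff_unique_mem.2
        ⟨mem_univ 1, fun σ _ => Equiv.ext fun x => Subsingleton.elim _ _⟩
    rw [huniv, sum_singleton]
    have h0 : (Ioi (0 : Fin 1)) = ∅ := by ext x; simp [Subsingleton.elim x 0]
    have hVd : Vd ξ = 1 := by
      rw [Vd]
      rw [Fin.prod_univ_one, h0, prod_empty]
    rw [hVd]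
    rw [Fin.prod_univ_one, Fin.prod_univ_one, Fin.prod_univ_one, h0, prod_empty, Iic_zero_fin,
      prod_singleton]
    simp
  | succ n IH =>
    intro q ξ hd
    -- nonvanishing facts
    have hξ1 : ∀ x, ξ x ≠ 1 := by
      intro x
      have := hd (Equiv.swap 0 x) 0
      rwa [Iic_zero_fin, prod_singleton, Equiv.swap_apply_left] at this
    have hΞ : (∏ x, ξ x) ≠ 1 := by
      have := hd 1 (Fin.last (n+1))
      rw [Iic_last_eq] at this
      simpa using this
    have hξne : ∀ x, ξ x - 1 ≠ 0 := fun x => sub_ne_zero.2 (hξ1 x)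
    have hΞne : (∏ x, ξ x) - 1 ≠ 0 := sub_ne_zero.2 hΞ
    -- reindex
    rw [← Function.Bijective.sum_comp eP_bijective
      (fun σ => ((Equiv.Perm.sign σ : ℤ) : ℂ) *
        ((∏ i, ∏ j ∈ Ioi i, ff q (ξ (σ i)) (ξ (σ j))) / ∏ k, ((∏ l ∈ Iic k, ξ (σ l)) - 1))),
      Fintype.sum_prod_type]
    -- pointwise rewriting
    have hsign : ∀ (m : Fin (n+2)) (σ' : Equiv.Perm (Fin (n+1))),
        ((Equiv.Perm.sign (eP m σ') : ℤ) : ℂ)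
          = (-1:ℂ)^((m:ℕ)+(n+1)) * ((Equiv.Perm.sign σ' : ℤ) : ℂ) := by
      intro m σ'
      rw [sign_eP]
      push_cast
      simp
    have hnum : ∀ (m : Fin (n+2)) (σ' : Equiv.Perm (Fin (n+1))),
        (∏ i, ∏ j ∈ Ioi i, ff q (ξ (eP m σ' i)) (ξ (eP m σ' j)))
          = (∏ i, ∏ j ∈ Ioi i, ff q (ξ (m.succAbove (σ' i))) (ξ (m.succAbove (σ' j)))) *
            ∏ x : Fin (n+1), ff q (ξ (m.succAbove x)) (ξ m) := by
      intro m σ'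
      rw [pair_split (fun i j => ff q (ξ (eP m σ' i)) (ξ (eP m σ' j)))]
      simp only [eP_castSucc, eP_last]
      congr 1
      exact Equiv.prod_comp σ' (fun y => ff q (ξ (m.succAbove y)) (ξ m))
    have hden : ∀ (m : Fin (n+2)) (σ' : Equiv.Perm (Fin (n+1))),
        (∏ k, ((∏ l ∈ Iic k, ξ (eP m σ' l)) - 1))
          = (∏ k' : Fin (n+1), ((∏ l ∈ Iic k', ξ (m.succAbove (σ' l))) - 1)) *
            ((∏ x, ξ x) - 1) := by
      intro m σ'
      rw [Fin.prod_univ_castSucc]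
      congr 1
      · refine prod_congr rfl fun k' _ => ?_
        rw [Iic_castSucc_eq, prod_map]
        simp only [Function.Embedding.coeFn_mk, eP_castSucc]
      · rw [Iic_last_eq, Equiv.prod_comp (eP m σ') ξ]
    have hIic : ∀ (m : Fin (n+2)) (σ' : Equiv.Perm (Fin (n+1))) (k' : Fin (n+1)),
        (∏ l ∈ Iic k', ξ (m.succAbove (σ' l))) = ∏ l ∈ Iic (Fin.castSucc k'), ξ (eP m σ' l) := by
      intro m σ' k'
      rw [Iic_castSucc_eq, prod_map]
      simp only [Function.Embedding.coeFn_mk, eP_castSucc]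
    have hd' : ∀ m : Fin (n+2), ∀ σ' : Equiv.Perm (Fin (n+1)), ∀ k' : Fin (n+1),
        (∏ l ∈ Iic k', (ξ ∘ m.succAbove) (σ' l)) ≠ 1 := by
      intro m σ' k'
      have := hd (eP m σ') (Fin.castSucc k')
      rw [← hIic m σ' k'] at this
      exact this
    have hstep : ∀ m : Fin (n+2),
        (∑ σ' : Equiv.Perm (Fin (n+1)), ((Equiv.Perm.sign (eP m σ') : ℤ) : ℂ) *
          ((∏ i, ∏ j ∈ Ioi i, ff q (ξ (eP m σ' i)) (ξ (eP m σ' j))) /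
            ∏ k, ((∏ l ∈ Iic k, ξ (eP m σ' l)) - 1)))
        = ((-1:ℂ)^((m:ℕ)+(n+1)) * (∏ x : Fin (n+1), ff q (ξ (m.succAbove x)) (ξ m)) /
            ((∏ x, ξ x) - 1)) *
          (q ^ ((n+1) * n / 2) * Vd (ξ ∘ m.succAbove) / ∏ j, ((ξ ∘ m.succAbove) j - 1)) := by
      intro m
      rw [← IH q (ξ ∘ m.succAbove) (hd' m), mul_sum]
      refine sum_congr rfl fun σ' _ => ?_
      rw [hsign, hnum, hden]
      simp only [Function.comp_apply]
      have hD1 : (∏ k' : Fin (n+1), ((∏ l ∈ Iic k', ξ (m.succAbove (σ' l))) - 1)) ≠ 0 :=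
        prod_ne_zero_iff.2 fun k' _ => sub_ne_zero.2 (by simpa using hd' m σ' k')
      field_simp
    simp only [hstep]
    -- final algebra using the key identity
    have hkey := key_all (n+1) q ξ
    rw [KeyEq] at hkey
    have hprodsplit : ∀ m : Fin (n+2),
        (∏ j, (ξ j - 1)) = (ξ m - 1) * ∏ j : Fin (n+1), ((ξ ∘ m.succAbove) j - 1) :=
      fun m => Fin.prod_univ_succAbove (fun x => ξ x - 1) m
    have hterm : ∀ m : Fin (n+2),
        ((-1:ℂ)^((m:ℕ)+(n+1)) * (∏ x : Fin (n+1), ff q (ξ (m.succAbove x)) (ξ m)) /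
            ((∏ x, ξ x) - 1)) *
          (q ^ ((n+1) * n / 2) * Vd (ξ ∘ m.succAbove) / ∏ j, ((ξ ∘ m.succAbove) j - 1))
        = (q ^ ((n+1) * n / 2) / (((∏ x, ξ x) - 1) * ∏ j, (ξ j - 1))) *
          ((-1:ℂ)^((m:ℕ)+(n+1)) * (ξ m - 1) *
            (∏ x : Fin (n+1), ff q (ξ (m.succAbove x)) (ξ m)) * Vd (ξ ∘ m.succAbove)) := by
      intro m
      have hm : ξ m - 1 ≠ 0 := hξne m
      have hrest : (∏ j : Fin (n+1), ((ξ ∘ m.succAbove) j - 1)) ≠ 0 :=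
        prod_ne_zero_iff.2 fun j _ => hξne (m.succAbove j)
      have hall : (∏ j, (ξ j - 1)) ≠ 0 := prod_ne_zero_iff.2 fun j _ => hξne j
      simp only [Function.comp_apply] at hrest ⊢
      rw [hprodsplit m]
      simp only [Function.comp_apply]
      field_simp
    simp only [hterm]
    rw [← mul_sum, hkey]
    have hexp : (n+2) * (n+1) / 2 = (n+1) * n / 2 + (n+1) := by
      have h2 : 2 ∣ (n+1) * n := by
        have := (Nat.even_mul_succ_self n).two_dvd
        rwa [Nat.mul_comm] at this
      have h3 : 2 ∣ (n+2) * (n+1) := by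
        have := (Nat.even_mul_succ_self (n+1)).two_dvd
        rwa [Nat.mul_comm] at this
      have h4 : (n+2)*(n+1) = (n+1)*n + 2*(n+1) := by ring
      omega
    rw [hexp, pow_add]
    have hall : (∏ j, (ξ j - 1)) ≠ 0 := prod_ne_zero_iff.2 fun j _ => hξne j
    field_simp
    ring

theorem stmt_2 (N : ℕ) (hN : 1 ≤ N) (p q : ℂ) (hpq : p + q = 1)
    (ξ : Fin N → ℂ)
    (hd : ∀ σ : Equiv.Perm (Fin N), ∀ k : Fin N, (∏ l ∈ Iic k, ξ (σ l)) ≠ 1) :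
    ∑ σ : Equiv.Perm (Fin N),
      ((Equiv.Perm.sign σ : ℤ) : ℂ) *
        ((∏ i : Fin N, ∏ j ∈ Ioi i, (p + q * ξ (σ i) * ξ (σ j) - ξ (σ i))) /
          ∏ k : Fin N, ((∏ l ∈ Iic k, ξ (σ l)) - 1))
      = q ^ (N * (N - 1) / 2) *
          (∏ i : Fin N, ∏ j ∈ Ioi i, (ξ j - ξ i)) / ∏ j, (ξ j - 1) := by
  obtain ⟨n, rfl⟩ : ∃ n, N = n + 1 := ⟨N - 1, by omega⟩
  have hp : p = 1 - q := by linear_combination hpq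
  subst hp
  have h := main_sum n q ξ hd
  have hnum : ∀ σ : Equiv.Perm (Fin (n+1)),
      (∏ i, ∏ j ∈ Ioi i, ((1-q) + q * ξ (σ i) * ξ (σ j) - ξ (σ i)))
        = ∏ i, ∏ j ∈ Ioi i, ff q (ξ (σ i)) (ξ (σ j)) :=
    fun σ => prod_congr rfl fun i _ => prod_congr rfl fun j _ => by unfold ff; ring
  simp only [hnum]
  rw [h, Vd]
  norm_num
end
end

section
/- For the totally asymmetric case p=1, q=0, define S(α,β) = −(1−α)/(1−β). For a permutation σ∈S_N, let A_σ = ∏{S(ξ_{σ(i)},ξ_{σ(j)}) : i<j, σ(i)>σ(j)} (product over inversions of σ). Then A_σ = sgn(σ)·∏_{i=1}^N (1−ξ_{σ(i)})^{σ(i)−i}. -/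
open Finset

lemma my_signAux_eq_sign {n : ℕ} (σ : Equiv.Perm (Fin n)) :
    Equiv.Perm.signAux σ = Equiv.Perm.sign σ := by
  rcases le_or_gt 2 n with h | h
  · have key : (MonoidHom.mk' Equiv.Perm.signAux Equiv.Perm.signAux_mul :
        Equiv.Perm (Fin n) →* ℤˣ) = Equiv.Perm.sign := by
      apply Equiv.Perm.eq_sign_of_surjective_hom
      intro u
      rcases Int.units_eq_one_or u with rfl | rfl
      · exact ⟨1, Equiv.Perm.signAux_one n⟩
      · refine ⟨Equiv.swap ⟨0, by omega⟩ ⟨1, by omega⟩,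
          Equiv.Perm.signAux_swap ?_⟩
        simp [Fin.ext_iff]
    exact congrFun (congrArg DFunLike.coe key) σ
  · have hσ : σ = 1 := by
      ext x
      have h2 : (σ x).val < n := (σ x).isLt
      have h3 : x.val < n := x.isLt
      omega
    subst hσ
    simp [Equiv.Perm.signAux_one]

lemma my_count {N : ℕ} (σ : Equiv.Perm (Fin N)) (i : Fin N) :
    (((Ioi i).filter (fun j => σ j < σ i)).card : ℤ)
      - (((Iio i).filter (fun j => σ i < σ j)).card : ℤ)
    = ((σ i : ℕ) : ℤ) - ((i : ℕ) : ℤ) := by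
  have hne : ∀ j : Fin N, j ≠ i → (σ j).val ≠ (σ i).val := by
    intro j hj h
    exact hj (σ.injective (Fin.ext h))
  -- second identity : card (Iio i) = i
  have h2 : ((Iio i).filter (fun j => σ j < σ i)).card
      + ((Iio i).filter (fun j => σ i < σ j)).card = (i : ℕ) := by
    have hEq : (Iio i).filter (fun j => σ i < σ j)
        = (Iio i).filter (fun j => ¬ σ j < σ i) := by
      apply filter_congr
      intro j hj
      simp only [mem_Iio] at hj
      have := hne j hj.ne
      simp only [Fin.lt_def]
      omega
    rw [hEq, Finset.card_filter_add_card_filter_not, Fin.card_Iio]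
  -- first identity : card of all k with σ k < σ i equals σ i
  have hall : ((univ : Finset (Fin N)).filter (fun k => σ k < σ i)).card = ((σ i : ℕ)) := by
    rw [← Fin.card_Iio (σ i)]
    apply Finset.card_bij (fun k _ => σ k)
    · intro k hk
      simp only [mem_filter] at hk
      simpa [mem_Iio] using hk.2
    · intro a ha b hb hab
      exact σ.injective hab
    · intro m hm
      refine ⟨σ.symm m, ?_, by simp⟩
      simp only [mem_filter, mem_univ, true_and, Equiv.apply_symm_apply]
      simpa [mem_Iio] using hm
  have hsplit : ((univ : Finset (Fin N)).filter (fun k => σ k < σ i)).card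
      = ((Iio i).filter (fun j => σ j < σ i)).card
        + ((Ioi i).filter (fun j => σ j < σ i)).card := by
    rw [← Finset.card_union_of_disjoint]
    · congr 1
      ext k
      simp only [mem_filter, mem_univ, true_and, mem_union, mem_Iio, mem_Ioi]
      constructor
      · intro hk
        have hki : k ≠ i := by
          intro h; subst h; exact lt_irrefl _ hk
        rcases lt_or_gt_of_ne hki with h | h
        · exact Or.inl ⟨h, hk⟩
        · exact Or.inr ⟨h, hk⟩
      · rintro (⟨_, hk⟩ | ⟨_, hk⟩) <;> exact hk
    · apply Finset.disjoint_filter_filter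
      simp only [Finset.disjoint_left, mem_Iio, mem_Ioi]
      intro a ha hb
      exact absurd (ha.trans hb) (lt_irrefl a)
  omega

theorem stmt_10 (N : ℕ) (ξ : Fin N → ℂ) (h1 : ∀ i, ξ i ≠ 1)
    (σ : Equiv.Perm (Fin N)) :
    (∏ i : Fin N, ∏ j ∈ Ioi i,
        if σ j < σ i then -((1 - ξ (σ i)) / (1 - ξ (σ j))) else 1)
      = ((Equiv.Perm.sign σ : ℤ) : ℂ) *
          ∏ i : Fin N, (1 - ξ (σ i)) ^ (((σ i : ℕ) : ℤ) - ((i : ℕ) : ℤ)) := by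
  have hu : ∀ i : Fin N, (1 - ξ i) ≠ 0 := by
    intro i h
    apply h1 i
    have : ξ i = 1 := by linear_combination -h
    exact this
  -- split each factor into three pieces
  have hsplit : ∀ i j : Fin N,
      (if σ j < σ i then -((1 - ξ (σ i)) / (1 - ξ (σ j))) else 1)
      = ((if σ j < σ i then (-1 : ℂ) else 1)
          * ((if σ j < σ i then (1 - ξ (σ i)) else 1)
            * (if σ j < σ i then (1 - ξ (σ j))⁻¹ else 1))) := by
    intro i j
    by_cases h : σ j < σ i
    · simp only [if_pos h]
      field_simp
    · simp [if_neg h]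
  have hprod :
      (∏ i : Fin N, ∏ j ∈ Ioi i,
        if σ j < σ i then -((1 - ξ (σ i)) / (1 - ξ (σ j))) else 1)
      = (∏ i : Fin N, ∏ j ∈ Ioi i, (if σ j < σ i then (-1 : ℂ) else 1))
        * ((∏ i : Fin N, ∏ j ∈ Ioi i, (if σ j < σ i then (1 - ξ (σ i)) else 1))
          * (∏ i : Fin N, ∏ j ∈ Ioi i, (if σ j < σ i then (1 - ξ (σ j))⁻¹ else 1))) := by
    simp only [← Finset.prod_mul_distrib]
    exact Finset.prod_congr rfl fun i _ => Finset.prod_congr rfl fun j _ => hsplit i j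
  rw [hprod]
  -- the sign part
  have hsign : (∏ i : Fin N, ∏ j ∈ Ioi i, (if σ j < σ i then (-1 : ℂ) else 1))
      = ((Equiv.Perm.sign σ : ℤ) : ℂ) := by
    rw [← my_signAux_eq_sign]
    unfold Equiv.Perm.signAux
    rw [Units.coe_prod, Int.cast_prod]
    rw [Finset.prod_sigma']
    apply Finset.prod_nbij' (fun x => (⟨x.2, x.1⟩ : Σ _ : Fin N, Fin N))
      (fun x => (⟨x.2, x.1⟩ : Σ _ : Fin N, Fin N))
    · rintro ⟨i, j⟩ hx
      simp only [Finset.mem_sigma, mem_univ, mem_Ioi, true_and] at hx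
      exact Equiv.Perm.mem_finPairsLT.2 hx
    · rintro ⟨j, i⟩ hx
      have := Equiv.Perm.mem_finPairsLT.1 hx
      simp only [Finset.mem_sigma, mem_univ, mem_Ioi, true_and]
      exact this
    · rintro ⟨i, j⟩ _; rfl
    · rintro ⟨j, i⟩ _; rfl
    · rintro ⟨i, j⟩ hx
      simp only [Finset.mem_sigma, mem_univ, mem_Ioi, true_and] at hx
      have hne : σ j ≠ σ i := fun h => absurd (σ.injective h) (ne_of_gt hx)
      by_cases h : σ j < σ i
      · rw [if_pos h, if_pos h.le]
        simp
      · rw [if_neg h, if_neg (fun hle => h (lt_of_le_of_ne hle hne))]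
        simp
  rw [hsign]
  congr 1
  -- the numerator part
  have hnum : (∏ i : Fin N, ∏ j ∈ Ioi i, (if σ j < σ i then (1 - ξ (σ i)) else 1))
      = ∏ i : Fin N, (1 - ξ (σ i)) ^ (((Ioi i).filter (fun j => σ j < σ i)).card) := by
    apply Finset.prod_congr rfl
    intro i _
    rw [Finset.prod_ite, Finset.prod_const, Finset.prod_const_one, mul_one]
  -- the denominator part : swap the order of products
  have hden : (∏ i : Fin N, ∏ j ∈ Ioi i, (if σ j < σ i then (1 - ξ (σ j))⁻¹ else 1))
      = ∏ j : Fin N, ((1 - ξ (σ j))⁻¹) ^ (((Iio j).filter (fun i => σ j < σ i)).card) := by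
    rw [Finset.prod_comm' (t' := (univ : Finset (Fin N))) (s' := fun j => Iio j)
      (by intro i j; simp [mem_Ioi, mem_Iio])]
    apply Finset.prod_congr rfl
    intro j _
    rw [Finset.prod_ite, Finset.prod_const, Finset.prod_const_one, mul_one]
  rw [hnum, hden, ← Finset.prod_mul_distrib]
  apply Finset.prod_congr rfl
  intro i _
  rw [← my_count σ i]
  rw [inv_pow, ← zpow_natCast (1 - ξ (σ i)), ← zpow_natCast (1 - ξ (σ i)) (((Iio i).filter _).card),
    ← zpow_neg, ← zpow_add₀ (hu (σ i))]
  congr 1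
  all_goals omega
end
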